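/- arXiv:2602.23145 — 5 statements merged into one kernel-verified Lean document; each statement's English description precedes it below -/
import Mathlib

section
/- Let x : [0,∞) → ℝ^d be continuous and let S be a nonempty subset of ℝ^d. Suppose that for every x* ∈ S the limit lim_{t→∞} ‖x(t) - x*‖ exists, and that every cluster point of the integral average t ↦ (1/t)∫₀ᵗ x(s) ds (as t → ∞) belongs to S. Then there exists x* ∈ S such that (1/t)∫₀ᵗ x(s) ds → x* as t → ∞. -/
open Filter MeasureTheory intervalIntegral Set

lemma cesaro_integral (h : ℝ → ℝ) (hc : ContinuousOn h (Set.Ici 0)) {c : ℝ}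
    (hl : Tendsto h atTop (nhds c)) :
    Tendsto (fun t => (1 / t) * ∫ s in (0:ℝ)..t, h s) atTop (nhds c) := by
  have hInt : ∀ a b : ℝ, 0 ≤ a → 0 ≤ b → IntervalIntegrable h volume a b := by
    intro a b ha hb
    exact (hc.mono (fun y hy => le_trans (le_inf ha hb) hy.1)).intervalIntegrable
  rw [Metric.tendsto_atTop] at hl ⊢
  intro ε hε
  obtain ⟨T₀, hT₀⟩ := hl (ε / 2) (by positivity)
  set T := max T₀ 0 with hTdef
  have hT : 0 ≤ T := le_max_right _ _
  have hTb : ∀ s ≥ T, |h s - c| ≤ ε / 2 := fun s hs =>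
    le_of_lt (by simpa [Real.dist_eq] using hT₀ s (le_trans (le_max_left _ _) hs))
  set C := ∫ s in (0:ℝ)..T, |h s - c| with hCdef
  have hC0 : 0 ≤ C := intervalIntegral.integral_nonneg hT (fun s _ => abs_nonneg _)
  refine ⟨max (T + 1) (2 * C / ε + 1), fun t ht => ?_⟩
  have htT : T + 1 ≤ t := le_trans (le_max_left _ _) ht
  have htC : 2 * C / ε + 1 ≤ t := le_trans (le_max_right _ _) ht
  have ht0 : 0 < t := lt_of_lt_of_le (by linarith) htT
  have hInt' : ∀ a b : ℝ, 0 ≤ a → 0 ≤ b → IntervalIntegrable (fun s => h s - c) volume a b :=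
    fun a b ha hb => (hInt a b ha hb).sub intervalIntegrable_const
  have key : ((1 / t) * ∫ s in (0:ℝ)..t, h s) - c
      = (1/t) * ∫ s in (0:ℝ)..t, (h s - c) := by
    rw [intervalIntegral.integral_sub (hInt 0 t le_rfl ht0.le) intervalIntegrable_const,
      intervalIntegral.integral_const]
    simp only [sub_zero, smul_eq_mul]
    field_simp
  have split : (∫ s in (0:ℝ)..t, (h s - c)) =
      (∫ s in (0:ℝ)..T, (h s - c)) + ∫ s in T..t, (h s - c) :=
    (intervalIntegral.integral_add_adjacent_intervals (hInt' 0 T le_rfl hT)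
      (hInt' T t hT ht0.le)).symm
  have b1 : |∫ s in (0:ℝ)..T, (h s - c)| ≤ C := by
    rw [hCdef]
    exact intervalIntegral.abs_integral_le_integral_abs hT
  have b2 : |∫ s in T..t, (h s - c)| ≤ (ε/2) * (t - T) := by
    have habs : |t - T| = t - T := abs_of_nonneg (by linarith)
    have := intervalIntegral.norm_integral_le_of_norm_le_const (C := ε/2)
      (f := fun s => h s - c) (a := T) (b := t) ?_
    · rw [Real.norm_eq_abs, habs] at this; exact this
    · intro s hs
      rw [Set.uIoc_of_le (by linarith)] at hs
      simpa using hTb s hs.1.le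
  rw [Real.dist_eq, key]
  have hbd : |(1/t) * ∫ s in (0:ℝ)..t, (h s - c)| ≤ (1/t) * (C + (ε/2) * (t - T)) := by
    rw [split, abs_mul, abs_of_pos (by positivity : (0:ℝ) < 1/t)]
    have htri := abs_add_le (∫ s in (0:ℝ)..T, (h s - c)) (∫ s in T..t, (h s - c))
    nlinarith [one_div_pos.2 ht0]
  refine lt_of_le_of_lt hbd ?_
  rw [mul_add]
  have h1 : (1/t) * C < ε / 2 := by
    rw [div_mul_eq_mul_div, one_mul, div_lt_iff₀ ht0]
    have he : ε * (2 * C / ε) = 2 * C := by field_simp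
    nlinarith [mul_le_mul_of_nonneg_left htC (le_of_lt hε)]
  have h2 : (1/t) * ((ε/2) * (t - T)) ≤ ε/2 := by
    rw [div_mul_eq_mul_div, one_mul, div_le_iff₀ ht0]
    nlinarith
  linarith

open scoped RealInnerProductSpace

/-- Opial-type lemma for the integral average. -/
theorem stmt_2 (d : ℕ) (x : ℝ → EuclideanSpace ℝ (Fin d))
    (S : Set (EuclideanSpace ℝ (Fin d)))
    (hx : ContinuousOn x (Set.Ici 0)) (hS : S.Nonempty)
    (hlim : ∀ p ∈ S, ∃ L : ℝ, Tendsto (fun t => ‖x t - p‖) atTop (nhds L))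
    (hclu : ∀ p, MapClusterPt p atTop
        (fun t : ℝ => (1 / t) • ∫ s in (0:ℝ)..t, x s) → p ∈ S) :
    ∃ p ∈ S, Tendsto (fun t : ℝ => (1 / t) • ∫ s in (0:ℝ)..t, x s)
      atTop (nhds p) := by
  set f : ℝ → EuclideanSpace ℝ (Fin d) := fun t => (1 / t) • ∫ s in (0:ℝ)..t, x s with hfdef
  have hInt : ∀ t : ℝ, 0 ≤ t → IntervalIntegrable x volume 0 t := fun t ht =>
    (hx.mono (fun y hy => le_trans (le_inf le_rfl ht) hy.1)).intervalIntegrable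
  -- boundedness of x on [0, ∞)
  obtain ⟨p₀, hp₀⟩ := hS
  obtain ⟨L₀, hL₀⟩ := hlim p₀ hp₀
  rw [Metric.tendsto_atTop] at hL₀
  obtain ⟨T₀, hT₀⟩ := hL₀ 1 one_pos
  set T := max T₀ 0 with hTdef
  obtain ⟨M₁, hM₁⟩ := (isCompact_Icc (a := (0:ℝ)) (b := T)).exists_bound_of_continuousOn
    (hx.mono (fun y hy => hy.1))
  set M : ℝ := max M₁ (|L₀| + 1 + ‖p₀‖) with hMdef
  have hM0 : 0 ≤ M := le_trans (by positivity) (le_max_right _ _)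
  have hxM : ∀ t : ℝ, 0 ≤ t → ‖x t‖ ≤ M := by
    intro t ht
    rcases le_or_gt t T with h | h
    · exact le_trans (hM₁ t ⟨ht, h⟩) (le_max_left _ _)
    · have := hT₀ t (le_trans (le_max_left _ _) h.le)
      rw [Real.dist_eq, abs_sub_lt_iff] at this
      have h1 : ‖x t - p₀‖ ≤ |L₀| + 1 := by
        have h2 := this.1
        linarith [le_abs_self L₀]
      calc ‖x t‖ = ‖(x t - p₀) + p₀‖ := by rw [sub_add_cancel]
        _ ≤ ‖x t - p₀‖ + ‖p₀‖ := norm_add_le _ _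
        _ ≤ |L₀| + 1 + ‖p₀‖ := by linarith
        _ ≤ M := le_max_right _ _
  -- average eventually in closed ball
  have hmem : ∀ᶠ t in atTop, f t ∈ Metric.closedBall (0 : EuclideanSpace ℝ (Fin d)) M := by
    filter_upwards [eventually_gt_atTop (0:ℝ)] with t ht
    have hb : ‖∫ s in (0:ℝ)..t, x s‖ ≤ M * |t - 0| := by
      apply intervalIntegral.norm_integral_le_of_norm_le_const
      intro s hs
      rw [Set.uIoc_of_le ht.le] at hs
      exact hxM s hs.1.le
    rw [Metric.mem_closedBall, dist_zero_right, hfdef]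
    simp only [norm_smul, norm_div, norm_one, Real.norm_eq_abs, abs_of_pos ht, sub_zero] at hb ⊢
    calc (1/t) * ‖∫ s in (0:ℝ)..t, x s‖ ≤ (1/t) * (M * t) := by
          apply mul_le_mul_of_nonneg_left _ (by positivity)
          simpa [abs_of_pos ht] using hb
      _ = M := by field_simp
  have hK : IsCompact (Metric.closedBall (0 : EuclideanSpace ℝ (Fin d)) M) := isCompact_closedBall _ _
  -- existence of a cluster point
  haveI : NeBot (Filter.map f atTop) := Filter.map_neBot
  obtain ⟨p, hpK, hp⟩ := hK.exists_clusterPt (f := Filter.map f atTop)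
    (le_principal_iff.2 (mem_map.2 hmem))
  have hpc : MapClusterPt p atTop f := hp
  have hpS : p ∈ S := hclu p hpc
  -- uniqueness of cluster points
  have huniq : ∀ q, MapClusterPt q atTop f → q = p := by
    intro q hq
    have hqS : q ∈ S := hclu q hq
    obtain ⟨Lp, hLp⟩ := hlim p hpS
    obtain ⟨Lq, hLq⟩ := hlim q hqS
    set v : EuclideanSpace ℝ (Fin d) := q - p with hvdef
    set c : ℝ := ((Lp ^ 2 - Lq ^ 2) - ‖p‖ ^ 2 + ‖q‖ ^ 2) / 2 with hcdef
    have hh : ∀ s : ℝ, ⟪v, x s⟫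
        = ((‖x s - p‖ ^ 2 - ‖x s - q‖ ^ 2) - ‖p‖ ^ 2 + ‖q‖ ^ 2) / 2 := by
      intro s
      have e1 := norm_sub_sq_real (x s) p
      have e2 := norm_sub_sq_real (x s) q
      have e3 : ⟪v, x s⟫ = ⟪x s, q⟫ - ⟪x s, p⟫ := by
        rw [hvdef, inner_sub_left, real_inner_comm q (x s), real_inner_comm p (x s)]
      linarith
    have hhl : Tendsto (fun s => ⟪v, x s⟫) atTop (nhds c) := by
      simp only [hh]
      have : Tendsto (fun s => ‖x s - p‖ ^ 2 - ‖x s - q‖ ^ 2) atTop (nhds (Lp ^ 2 - Lq ^ 2)) :=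
        (hLp.pow 2).sub (hLq.pow 2)
      exact (((this.sub_const (‖p‖ ^ 2)).add_const (‖q‖ ^ 2)).div_const 2)
    have hhc : ContinuousOn (fun s => ⟪v, x s⟫) (Set.Ici 0) :=
      continuousOn_const.inner hx
    have hces := cesaro_integral _ hhc hhl
    have heq : ∀ t : ℝ, 0 < t →
        (fun u : EuclideanSpace ℝ (Fin d) => ⟪v, u⟫) (f t) = (1 / t) * ∫ s in (0:ℝ)..t, ⟪v, x s⟫ := by
      intro t ht
      have hcomm := (innerSL ℝ v).intervalIntegral_comp_comm (hInt t ht.le)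
      simp only [innerSL_apply_apply] at hcomm
      rw [hfdef]
      simp only [real_inner_smul_right]
      rw [← hcomm]
    have key : ∀ z : EuclideanSpace ℝ (Fin d), MapClusterPt z atTop f → ⟪v, z⟫ = c := by
      intro z hz
      have h2 : MapClusterPt ((fun u : EuclideanSpace ℝ (Fin d) => ⟪v, u⟫) z) atTop ((fun u : EuclideanSpace ℝ (Fin d) => ⟪v, u⟫) ∘ f) :=
        hz.continuousAt_comp ((continuous_const.inner continuous_id).continuousAt)
      have hEq : ((fun u : EuclideanSpace ℝ (Fin d) => ⟪v, u⟫) ∘ f)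
          =ᶠ[atTop] (fun t => (1 / t) * ∫ s in (0:ℝ)..t, ⟪v, x s⟫) :=
        (eventually_gt_atTop (0:ℝ)).mono fun t ht => heq t ht
      have h3 : MapClusterPt ((fun u : EuclideanSpace ℝ (Fin d) => ⟪v, u⟫) z) atTop
          (fun t => (1 / t) * ∫ s in (0:ℝ)..t, ⟪v, x s⟫) := by
        rwa [mapClusterPt_def, Filter.map_congr hEq] at h2
      exact eq_of_nhds_neBot (h3.clusterPt.mono hces)
    have hvp := key p hpc
    have hvq := key q hq
    have hvv : ⟪v, v⟫ = 0 := by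
      rw [hvdef, inner_sub_right]
      rw [← hvdef]
      rw [hvq, hvp]
      ring
    have : v = 0 := inner_self_eq_zero.1 hvv
    exact sub_eq_zero.1 this
  exact ⟨p, hpS, hK.tendsto_nhds_of_unique_mapClusterPt hmem (fun z _ hz => huniq z hz)⟩
end

section
/- Let t₀ ≥ 0, T > t₀, and let ψ : [t₀,T] → [0,∞) be lower semicontinuous. Suppose ℓ : [0,∞) → [0,∞) is continuous, β is locally integrable, and for all t₀ ≤ s < t ≤ T one has ψ(t) ≤ ψ(s) - ∫ₛᵗ ℓ(τ)ψ(τ) dτ + ∫ₛᵗ β(τ) dτ. Then for all t ∈ [t₀,T], ψ(t) ≤ exp(-∫_{t₀}^t ℓ(s) ds)[ψ(t₀) + ∫_{t₀}^t exp(∫_{t₀}^s ℓ(τ) dτ) β(s) ds]. -/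
open MeasureTheory intervalIntegral

/-- A lower semicontinuous function on `Icc a b` is a.e. strongly measurable there. -/
lemma lsc_aesm {ψ : ℝ → ℝ} {a b : ℝ} (h : LowerSemicontinuousOn ψ (Set.Icc a b)) :
    AEStronglyMeasurable ψ (volume.restrict (Set.Icc a b)) := by
  have key : ∀ c : ℝ, MeasurableSet (Set.Icc a b ∩ ψ ⁻¹' Set.Ioi c) := by
    intro c
    have h1 : ∀ x ∈ Set.Icc a b ∩ ψ ⁻¹' Set.Ioi c,
        ∃ U, IsOpen U ∧ x ∈ U ∧ U ∩ Set.Icc a b ⊆ ψ ⁻¹' Set.Ioi c := by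
      intro x hx
      have := h x hx.1 c hx.2
      rw [Filter.eventually_iff, mem_nhdsWithin] at this
      obtain ⟨U, hU, hxU, hsub⟩ := this
      exact ⟨U, hU, hxU, hsub⟩
    choose! U hUopen hUx hUsub using h1
    have : Set.Icc a b ∩ ψ ⁻¹' Set.Ioi c
        = Set.Icc a b ∩ ⋃ x ∈ Set.Icc a b ∩ ψ ⁻¹' Set.Ioi c, U x := by
      ext y; constructor
      · intro hy
        exact ⟨hy.1, Set.mem_biUnion hy (hUx y hy)⟩
      · rintro ⟨hy1, hy2⟩
        simp only [Set.mem_iUnion] at hy2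
        obtain ⟨x, hx, hyU⟩ := hy2
        exact ⟨hy1, hUsub x hx ⟨hyU, hy1⟩⟩
    rw [this]
    exact measurableSet_Icc.inter (isOpen_biUnion (fun x hx => hUopen x hx)).measurableSet
  set φ : ℝ → ℝ := (Set.Icc a b).piecewise ψ 0 with hφ
  have hφm : Measurable φ := by
    apply measurable_of_Ioi
    intro c
    rw [hφ, Set.piecewise_preimage, Set.ite]
    refine MeasurableSet.union ?_ ?_
    · rw [Set.inter_comm]; exact key c
    · exact MeasurableSet.diff (measurable_const measurableSet_Ioi) measurableSet_Icc
  refine hφm.aestronglyMeasurable.congr ?_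
  filter_upwards [ae_restrict_mem measurableSet_Icc] with x hx
  exact Set.piecewise_eq_of_mem _ _ _ hx

lemma cont_mul_integrableOn {a b : ℝ} {F g : ℝ → ℝ} (hF : Continuous F)
    (hg : IntegrableOn g (Set.Ioc a b)) :
    IntegrableOn (fun x => F x * g x) (Set.Ioc a b) := by
  rcases le_or_gt a b with hab | hab
  swap
  · rw [Set.Ioc_eq_empty (not_lt.2 hab.le)]; simp [IntegrableOn]
  obtain ⟨C, hC0, hC⟩ : ∃ C, 0 ≤ C ∧ ∀ x ∈ Set.Icc a b, |F x| ≤ C := by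
    obtain ⟨x0, -, hx0⟩ := isCompact_Icc.exists_isMaxOn (Set.nonempty_Icc.2 hab)
      (continuous_abs.comp hF).continuousOn
    exact ⟨|F x0|, abs_nonneg _, fun x hx => hx0 hx⟩
  refine Integrable.mono' (hg.norm.const_mul C)
    ((hF.aestronglyMeasurable (μ := volume.restrict (Set.Ioc a b))).mul hg.aestronglyMeasurable) ?_
  filter_upwards [ae_restrict_mem measurableSet_Ioc] with x hx
  rw [Real.norm_eq_abs, abs_mul]
  exact mul_le_mul_of_nonneg_right (hC x (Set.Ioc_subset_Icc_self hx)) (abs_nonneg _)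

lemma fubini_swap {a b : ℝ} (hab : a ≤ b) {F g : ℝ → ℝ} (hF : Continuous F)
    (hg : IntegrableOn g (Set.Ioc a b)) :
    ∫ s in Set.Ioc a b, (∫ r in Set.Ioc s b, F r) * g s
      = ∫ r in Set.Ioc a b, F r * ∫ s in Set.Ioc a r, g s := by
  set μ := volume.restrict (Set.Ioc a b) with hμ
  haveI : IsFiniteMeasure μ := by
    constructor
    rw [hμ, Measure.restrict_apply_univ, Real.volume_Ioc]
    exact ENNReal.ofReal_lt_top
  obtain ⟨C, hC0, hC⟩ : ∃ C, 0 ≤ C ∧ ∀ x ∈ Set.Icc a b, |F x| ≤ C := by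
    obtain ⟨x0, -, hx0⟩ := isCompact_Icc.exists_isMaxOn (Set.nonempty_Icc.2 hab)
      (continuous_abs.comp hF).continuousOn
    exact ⟨|F x0|, abs_nonneg _, fun x hx => hx0 hx⟩
  set f : ℝ → ℝ → ℝ := fun s r => if s < r then F r * g s else 0 with hf
  have hfint : Integrable (Function.uncurry f) (μ.prod μ) := by
    have hmeas : AEStronglyMeasurable (Function.uncurry f) (μ.prod μ) := by
      have h1 : AEStronglyMeasurable (fun p : ℝ × ℝ => F p.2 * g p.1) (μ.prod μ) :=
        ((hF.aestronglyMeasurable (μ := μ)).comp_snd).mul (hg.aestronglyMeasurable.comp_fst)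
      have h2 : MeasurableSet {p : ℝ × ℝ | p.1 < p.2} :=
        measurableSet_lt measurable_fst measurable_snd
      have : Function.uncurry f
          = Set.indicator {p : ℝ × ℝ | p.1 < p.2} (fun p => F p.2 * g p.1) := by
        ext p
        by_cases hp : p.1 < p.2
        · simp [hf, Function.uncurry, Set.indicator, hp]
        · simp [hf, Function.uncurry, Set.indicator, hp]
      rw [this]
      exact h1.indicator h2
    have h1 : Integrable (fun z : ℝ × ℝ => C * |g z.1|) (μ.prod μ) := by
      have := Integrable.mul_prod (μ := μ) (ν := μ) (hg.norm.const_mul C) (integrable_const (1:ℝ))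
      simpa using this
    refine Integrable.mono' h1 hmeas ?_
    · have hae : ∀ᵐ p ∂(μ.prod μ), p.2 ∈ Set.Ioc a b := by
        rw [ae_iff]
        have hset : {p : ℝ × ℝ | ¬ p.2 ∈ Set.Ioc a b} = Set.univ ×ˢ (Set.Ioc a b)ᶜ := by
          ext p; simp
        rw [hset, Measure.prod_prod]
        have : μ (Set.Ioc a b)ᶜ = 0 := by
          rw [hμ, Measure.restrict_apply measurableSet_Ioc.compl]
          simp
        rw [this, mul_zero]
      filter_upwards [hae] with p hp2
      rw [hf]
      simp only [Function.uncurry]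
      by_cases hp : p.1 < p.2
      · simp only [hp, if_true, Real.norm_eq_abs, abs_mul]
        exact mul_le_mul_of_nonneg_right (hC p.2 (Set.Ioc_subset_Icc_self hp2)) (abs_nonneg _)
      · simp [hp, mul_nonneg hC0 (abs_nonneg _)]
  have hswap := integral_integral_swap hfint
  have hL : ∫ s, (∫ r, f s r ∂μ) ∂μ
      = ∫ s in Set.Ioc a b, (∫ r in Set.Ioc s b, F r) * g s := by
    refine setIntegral_congr_fun measurableSet_Ioc ?_
    intro s hs
    have heq : ∀ r ∈ Set.Ioc a b,
        f s r = Set.indicator (Set.Ioc s b) (fun r => F r * g s) r := by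
      intro r hr
      rw [hf]
      by_cases hsr : s < r
      · simp [Set.indicator, hsr, hr.2]
      · simp [Set.indicator, hsr, fun (h : s < r ∧ r ≤ b) => hsr h.1]
    calc ∫ r, f s r ∂μ
        = ∫ r in Set.Ioc a b, Set.indicator (Set.Ioc s b) (fun r => F r * g s) r := by
          rw [hμ]; exact setIntegral_congr_fun measurableSet_Ioc heq
      _ = ∫ r in Set.Ioc s b ∩ Set.Ioc a b, F r * g s := by
          rw [MeasureTheory.integral_indicator measurableSet_Ioc, Measure.restrict_restrict measurableSet_Ioc]
      _ = ∫ r in Set.Ioc s b, F r * g s := by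
          rw [Set.inter_eq_left.2 (Set.Ioc_subset_Ioc_left hs.1.le)]
      _ = (∫ r in Set.Ioc s b, F r) * g s := by rw [MeasureTheory.integral_mul_const]
  have hR : ∫ r, (∫ s, f s r ∂μ) ∂μ
      = ∫ r in Set.Ioc a b, F r * ∫ s in Set.Ioc a r, g s := by
    refine setIntegral_congr_fun measurableSet_Ioc ?_
    intro r hr
    have heq : ∀ s, f s r = Set.indicator (Set.Iio r) (fun s => F r * g s) s := by
      intro s
      rfl
    calc ∫ s, f s r ∂μ
        = ∫ s, Set.indicator (Set.Iio r) (fun s => F r * g s) s ∂μ := by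
          exact integral_congr_ae (Filter.Eventually.of_forall heq)
      _ = ∫ s in Set.Iio r ∩ Set.Ioc a b, F r * g s := by
          rw [hμ, MeasureTheory.integral_indicator measurableSet_Iio,
            Measure.restrict_restrict measurableSet_Iio]
      _ = ∫ s in Set.Ioo a r, F r * g s := by
          have hseteq : Set.Iio r ∩ Set.Ioc a b = Set.Ioo a r := by
            ext x
            simp only [Set.mem_inter_iff, Set.mem_Iio, Set.mem_Ioc, Set.mem_Ioo]
            constructor
            · rintro ⟨h1, h2, h3⟩; exact ⟨h2, h1⟩
            · rintro ⟨h1, h2⟩; exact ⟨h2, h1, le_trans h2.le hr.2⟩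
          rw [hseteq]
      _ = ∫ s in Set.Ioc a r, F r * g s := (integral_Ioc_eq_integral_Ioo).symm
      _ = F r * ∫ s in Set.Ioc a r, g s := by rw [MeasureTheory.integral_const_mul]
  rw [← hL, ← hR]
  exact hswap

/-- Gronwall-type comparison lemma for a lower semicontinuous
nonnegative function satisfying an integral dissipation inequality. -/
theorem stmt_5 (t₀ T : ℝ) (ht₀ : 0 ≤ t₀) (hT : t₀ < T)
    (ψ : ℝ → ℝ) (hψlsc : LowerSemicontinuousOn ψ (Set.Icc t₀ T))
    (hψnn : ∀ t ∈ Set.Icc t₀ T, 0 ≤ ψ t)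
    (ℓ : ℝ → ℝ) (hℓcont : Continuous ℓ) (hℓnn : ∀ t, 0 ≤ t → 0 ≤ ℓ t)
    (β : ℝ → ℝ) (hβ : LocallyIntegrable β volume)
    (hineq : ∀ s t, t₀ ≤ s → s < t → t ≤ T →
      ψ t ≤ ψ s - (∫ τ in s..t, ℓ τ * ψ τ) + ∫ τ in s..t, β τ) :
    ∀ t ∈ Set.Icc t₀ T,
      ψ t ≤ Real.exp (-(∫ s in t₀..t, ℓ s)) *
        (ψ t₀ + ∫ s in t₀..t, Real.exp (∫ τ in t₀..s, ℓ τ) * β s) := by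
  intro t ht
  -- basic facts
  have hβiv : ∀ u v : ℝ, IntervalIntegrable β volume u v := fun u v =>
    (hβ.integrableOn_isCompact isCompact_uIcc).intervalIntegrable
  have hβInt : IntegrableOn β (Set.Icc t₀ T) := hβ.integrableOn_isCompact isCompact_Icc
  have hψm : AEStronglyMeasurable ψ (volume.restrict (Set.Icc t₀ T)) := lsc_aesm hψlsc
  haveI hfin : IsFiniteMeasure (volume.restrict (Set.Icc t₀ T)) := by
    constructor
    rw [Measure.restrict_apply_univ, Real.volume_Icc]
    exact ENNReal.ofReal_lt_top
  -- nonnegativity of ℓ on relevant range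
  have hℓnn' : ∀ τ ∈ Set.Icc t₀ T, 0 ≤ ℓ τ := fun τ hτ => hℓnn τ (le_trans ht₀ hτ.1)
  -- bound on ψ
  set M : ℝ := ψ t₀ + ∫ τ in t₀..T, |β τ| with hM
  have hMbound : ∀ x ∈ Set.Icc t₀ T, ψ x ≤ M := by
    intro x hx
    have habs : ∀ u v : ℝ, t₀ ≤ u → u ≤ v → v ≤ T →
        (∫ τ in u..v, |β τ|) ≤ ∫ τ in t₀..T, |β τ| := by
      intro u v h1 h2 h3
      have e1 : (∫ τ in t₀..u, |β τ|) + ∫ τ in u..v, |β τ| = ∫ τ in t₀..v, |β τ| :=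
        integral_add_adjacent_intervals (hβiv t₀ u).abs (hβiv u v).abs
      have e2 : (∫ τ in t₀..v, |β τ|) + ∫ τ in v..T, |β τ| = ∫ τ in t₀..T, |β τ| :=
        integral_add_adjacent_intervals (hβiv t₀ v).abs (hβiv v T).abs
      have p1 : 0 ≤ ∫ τ in t₀..u, |β τ| :=
        intervalIntegral.integral_nonneg h1 (fun τ _ => abs_nonneg _)
      have p2 : 0 ≤ ∫ τ in v..T, |β τ| :=
        intervalIntegral.integral_nonneg h3 (fun τ _ => abs_nonneg _)
      linarith
    rcases eq_or_lt_of_le hx.1 with heq | hlt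
    · rw [← heq, hM]
      have : 0 ≤ ∫ τ in t₀..T, |β τ| :=
        intervalIntegral.integral_nonneg hT.le (fun τ _ => abs_nonneg _)
      linarith
    · have h1 := hineq t₀ x le_rfl hlt hx.2
      have h2 : 0 ≤ ∫ τ in t₀..x, ℓ τ * ψ τ := by
        apply intervalIntegral.integral_nonneg hx.1
        intro τ hτ
        exact mul_nonneg (hℓnn τ (le_trans ht₀ hτ.1))
          (hψnn τ ⟨hτ.1, le_trans hτ.2 hx.2⟩)
      have h3 : (∫ τ in t₀..x, β τ) ≤ ∫ τ in t₀..x, |β τ| :=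
        intervalIntegral.integral_mono_on hx.1 (hβiv t₀ x) (hβiv t₀ x).abs
          (fun τ _ => le_abs_self _)
      have h4 := habs t₀ x le_rfl hx.1 hx.2
      rw [hM]; linarith
  have hMnn : 0 ≤ M := le_trans (hψnn t₀ ⟨le_rfl, hT.le⟩) (hMbound t₀ ⟨le_rfl, hT.le⟩)
  -- integrability of ψ and ℓ * ψ on Icc t₀ T
  have hψInt : IntegrableOn ψ (Set.Icc t₀ T) := by
    refine Integrable.mono' (integrable_const M) hψm ?_
    filter_upwards [ae_restrict_mem measurableSet_Icc] with x hx
    rw [Real.norm_eq_abs, abs_of_nonneg (hψnn x hx)]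
    exact hMbound x hx
  have hℓψInt : IntegrableOn (fun τ => ℓ τ * ψ τ) (Set.Icc t₀ T) := by
    obtain ⟨C, hC0, hC⟩ : ∃ C, 0 ≤ C ∧ ∀ x ∈ Set.Icc t₀ T, |ℓ x| ≤ C := by
      obtain ⟨x0, -, hx0⟩ := isCompact_Icc.exists_isMaxOn (Set.nonempty_Icc.2 hT.le)
        (continuous_abs.comp hℓcont).continuousOn
      exact ⟨|ℓ x0|, abs_nonneg _, fun x hx => hx0 hx⟩
    refine Integrable.mono' (integrable_const (C * M))
      ((hℓcont.aestronglyMeasurable (μ := volume.restrict (Set.Icc t₀ T))).mul hψm) ?_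
    filter_upwards [ae_restrict_mem measurableSet_Icc] with x hx
    rw [Real.norm_eq_abs, abs_mul, abs_of_nonneg (hψnn x hx)]
    exact mul_le_mul (hC x hx) (hMbound x hx) (hψnn x hx) hC0
  set g : ℝ → ℝ := fun τ => β τ - ℓ τ * ψ τ with hg
  have hgInt : IntegrableOn g (Set.Icc t₀ T) := hβInt.sub hℓψInt
  have hsubIoc : ∀ u v : ℝ, t₀ ≤ u → v ≤ T → Set.Ioc u v ⊆ Set.Icc t₀ T := by
    intro u v h1 h2 x hx
    exact ⟨le_trans h1 hx.1.le, le_trans hx.2 h2⟩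
  have hII : ∀ (f : ℝ → ℝ), IntegrableOn f (Set.Icc t₀ T) →
      ∀ u v, t₀ ≤ u → u ≤ v → v ≤ T → IntervalIntegrable f volume u v := by
    intro f hf u v h1 h2 h3
    rw [intervalIntegrable_iff_integrableOn_Ioc_of_le h2]
    exact hf.mono_set (hsubIoc u v h1 h3)
  -- the primitive Φ and the antitone part D
  set Φ : ℝ → ℝ := fun x => ∫ τ in t₀..x, g τ with hΦ
  set D : ℝ → ℝ := fun x => ψ x - Φ x with hD
  have hΦ0 : Φ t₀ = 0 := integral_same
  have hDanti : ∀ u v, t₀ ≤ u → u ≤ v → v ≤ T → D v ≤ D u := by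
    intro u v h1 h2 h3
    rcases eq_or_lt_of_le h2 with heq | hlt
    · rw [heq]
    · have key := hineq u v h1 hlt h3
      have hadd : Φ u + ∫ τ in u..v, g τ = Φ v :=
        integral_add_adjacent_intervals
          (hII g hgInt t₀ u le_rfl h1 (le_trans h2 h3))
          (hII g hgInt u v h1 h2 h3)
      have hsplit : (∫ τ in u..v, g τ)
          = (∫ τ in u..v, β τ) - ∫ τ in u..v, ℓ τ * ψ τ := by
        rw [hg]
        exact intervalIntegral.integral_sub (hβiv u v)
          (hII (fun τ => ℓ τ * ψ τ) hℓψInt u v h1 h2 h3)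
      simp only [hD]
      linarith [hadd, hsplit]
  -- trivial case t = t₀
  rcases eq_or_lt_of_le ht.1 with heq | hlt
  · rw [← heq]
    simp
  -- now t₀ < t ≤ T
  set L : ℝ → ℝ := fun x => ∫ τ in t₀..x, ℓ τ with hL
  set Ef : ℝ → ℝ := fun x => Real.exp (L x) with hEf
  have hEfpos : ∀ x, 0 < Ef x := fun x => Real.exp_pos _
  have hLderiv : ∀ x, HasDerivAt L (ℓ x) x := by
    intro x
    exact intervalIntegral.integral_hasDerivAt_right (hℓcont.intervalIntegrable t₀ x)
      (hℓcont.stronglyMeasurable.stronglyMeasurableAtFilter) hℓcont.continuousAt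
  have hEfderiv : ∀ x, HasDerivAt Ef (ℓ x * Ef x) x := by
    intro x
    have := (hLderiv x).exp
    simpa [hEf, mul_comm] using this
  have hEfcont : Continuous Ef :=
    continuous_iff_continuousAt.2 fun x => (hEfderiv x).continuousAt
  have hℓEfcont : Continuous (fun τ => ℓ τ * Ef τ) := hℓcont.mul hEfcont
  have hEdiff : ∀ u v : ℝ, Ef v - Ef u = ∫ τ in u..v, ℓ τ * Ef τ := by
    intro u v
    exact (intervalIntegral.integral_eq_sub_of_hasDerivAt (fun τ _ => hEfderiv τ)
      (hℓEfcont.intervalIntegrable u v)).symm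
  have hEf1 : Ef t₀ = 1 := by simp [hEf, hL]
  -- set-integral conversions
  have hIocInt : IntegrableOn g (Set.Ioc t₀ t) :=
    hgInt.mono_set (hsubIoc t₀ t le_rfl ht.2)
  have hΦIoc : ∀ x, t₀ ≤ x → Φ x = ∫ τ in Set.Ioc t₀ x, g τ := by
    intro x hx
    rw [hΦ]
    exact intervalIntegral.integral_of_le hx
  -- key identity (b) : Ef t * Φ t = ∫ Ef g + ∫ (ℓ Ef) Φ over Ioc t₀ t
  have hEfgInt : IntegrableOn (fun τ => Ef τ * g τ) (Set.Ioc t₀ t) :=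
    cont_mul_integrableOn hEfcont hIocInt
  have hB : Ef t * Φ t = (∫ τ in Set.Ioc t₀ t, Ef τ * g τ)
      + ∫ r in Set.Ioc t₀ t, (ℓ r * Ef r) * Φ r := by
    have e1 : Ef t * Φ t = ∫ τ in Set.Ioc t₀ t, Ef t * g τ := by
      rw [hΦIoc t ht.1, MeasureTheory.integral_const_mul]
    have e2 : (∫ τ in Set.Ioc t₀ t, Ef t * g τ) - (∫ τ in Set.Ioc t₀ t, Ef τ * g τ)
        = ∫ τ in Set.Ioc t₀ t, (Ef t - Ef τ) * g τ := by
      rw [← MeasureTheory.integral_sub (cont_mul_integrableOn continuous_const hIocInt) hEfgInt]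
      congr 1
      funext τ
      ring
    have e3 : (∫ τ in Set.Ioc t₀ t, (Ef t - Ef τ) * g τ)
        = ∫ τ in Set.Ioc t₀ t, (∫ r in Set.Ioc τ t, ℓ r * Ef r) * g τ := by
      refine setIntegral_congr_fun measurableSet_Ioc ?_
      intro τ hτ
      dsimp only
      rw [hEdiff τ t, intervalIntegral.integral_of_le hτ.2]
    have e4 := fubini_swap hlt.le hℓEfcont hIocInt
    have e5 : (∫ r in Set.Ioc t₀ t, (ℓ r * Ef r) * ∫ s in Set.Ioc t₀ r, g s)
        = ∫ r in Set.Ioc t₀ t, (ℓ r * Ef r) * Φ r := by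
      refine setIntegral_congr_fun measurableSet_Ioc ?_
      intro r hr
      dsimp only
      rw [hΦIoc r hr.1.le]
    linarith [e1, e2, e3, e4, e5]
  -- integrability of the pieces for step (a)
  have hΦcont : ContinuousOn Φ (Set.Icc t₀ T) := by
    have := intervalIntegral.continuousOn_primitive_interval
      (a := t₀) (b := T) (f := g) (μ := volume) ?_
    · rwa [Set.uIcc_of_le hT.le] at this
    · rwa [Set.uIcc_of_le hT.le]
  have hℓEfψInt : IntegrableOn (fun τ => (ℓ τ * Ef τ) * ψ τ) (Set.Ioc t₀ t) := by
    have : IntegrableOn ψ (Set.Ioc t₀ t) := hψInt.mono_set (hsubIoc t₀ t le_rfl ht.2)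
    exact cont_mul_integrableOn hℓEfcont this
  have hℓEfΦInt : IntegrableOn (fun τ => (ℓ τ * Ef τ) * Φ τ) (Set.Ioc t₀ t) := by
    have h1 : ContinuousOn (fun τ => (ℓ τ * Ef τ) * Φ τ) (Set.Icc t₀ T) :=
      (hℓEfcont.continuousOn).mul hΦcont
    exact (h1.integrableOn_Icc).mono_set (hsubIoc t₀ t le_rfl ht.2)
  have hℓEfDInt : IntegrableOn (fun τ => (ℓ τ * Ef τ) * D τ) (Set.Ioc t₀ t) := by
    have heq : (fun τ => (ℓ τ * Ef τ) * D τ)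
        = fun τ => (ℓ τ * Ef τ) * ψ τ - (ℓ τ * Ef τ) * Φ τ := by
      funext τ; rw [hD]; ring
    rw [heq]
    exact hℓEfψInt.sub hℓEfΦInt
  -- step (a) : Ef t * D t ≤ D t₀ + ∫ (ℓ Ef) D
  have hA : Ef t * D t ≤ D t₀ + ∫ τ in Set.Ioc t₀ t, (ℓ τ * Ef τ) * D τ := by
    have hmono : (∫ τ in Set.Ioc t₀ t, (ℓ τ * Ef τ) * D t)
        ≤ ∫ τ in Set.Ioc t₀ t, (ℓ τ * Ef τ) * D τ := by
      refine setIntegral_mono_on (cont_mul_integrableOn hℓEfcont ?_) hℓEfDInt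
        measurableSet_Ioc ?_
      · exact integrableOn_const (by rw [Real.volume_Ioc]; exact ENNReal.ofReal_ne_top)
      · intro τ hτ
        have hDle : D t ≤ D τ := hDanti τ t hτ.1.le hτ.2 ht.2
        have hnn : 0 ≤ ℓ τ * Ef τ :=
          mul_nonneg (hℓnn τ (le_trans ht₀ hτ.1.le)) (hEfpos τ).le
        exact mul_le_mul_of_nonneg_left hDle hnn
    have hconst : (∫ τ in Set.Ioc t₀ t, (ℓ τ * Ef τ) * D t) = (Ef t - 1) * D t := by
      rw [MeasureTheory.integral_mul_const]
      congr 1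
      rw [← intervalIntegral.integral_of_le hlt.le, ← hEdiff t₀ t, hEf1]
    have hDt : D t ≤ D t₀ := hDanti t₀ t le_rfl hlt.le ht.2
    nlinarith [hmono, hconst, hDt]
  -- combine
  have hsum : (∫ τ in Set.Ioc t₀ t, (ℓ τ * Ef τ) * D τ)
      + (∫ r in Set.Ioc t₀ t, (ℓ r * Ef r) * Φ r)
      = ∫ τ in Set.Ioc t₀ t, (ℓ τ * Ef τ) * ψ τ := by
    rw [← MeasureTheory.integral_add hℓEfDInt hℓEfΦInt]
    congr 1
    funext τ
    rw [hD]
    ring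
  have hgsplit : (∫ τ in Set.Ioc t₀ t, Ef τ * g τ)
      = (∫ τ in Set.Ioc t₀ t, Ef τ * β τ) - ∫ τ in Set.Ioc t₀ t, (ℓ τ * Ef τ) * ψ τ := by
    have h1 : IntegrableOn (fun τ => Ef τ * β τ) (Set.Ioc t₀ t) :=
      cont_mul_integrableOn hEfcont (hβInt.mono_set (hsubIoc t₀ t le_rfl ht.2))
    rw [← MeasureTheory.integral_sub h1 hℓEfψInt]
    congr 1
    funext τ
    rw [hg]
    ring
  have hfinal : Ef t * ψ t ≤ ψ t₀ + ∫ τ in Set.Ioc t₀ t, Ef τ * β τ := by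
    have hψeq : Ef t * ψ t = Ef t * D t + Ef t * Φ t := by rw [hD]; ring
    have hD0 : D t₀ = ψ t₀ := by
      show ψ t₀ - Φ t₀ = ψ t₀
      rw [hΦ0]; ring
    linarith [hA, hB, hsum, hgsplit, hψeq, hD0]
  -- conclude
  have hgoal2 : (∫ s in t₀..t, Real.exp (∫ τ in t₀..s, ℓ τ) * β s)
      = ∫ τ in Set.Ioc t₀ t, Ef τ * β τ := intervalIntegral.integral_of_le hlt.le
  rw [hgoal2, Real.exp_neg]
  have hEt : Real.exp (∫ s in t₀..t, ℓ s) = Ef t := rfl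
  rw [hEt]
  calc ψ t = (Ef t)⁻¹ * (Ef t * ψ t) := by
        rw [← mul_assoc, inv_mul_cancel₀ (hEfpos t).ne', one_mul]
    _ ≤ (Ef t)⁻¹ * (ψ t₀ + ∫ τ in Set.Ioc t₀ t, Ef τ * β τ) := by
        exact mul_le_mul_of_nonneg_left hfinal (inv_nonneg.2 (hEfpos t).le)
end

section
/- Let A : ℝ^d ⇉ ℝ^d be maximal monotone, and let x, y : [0,∞) → ℝ^d be absolutely continuous curves satisfying x'(t) ∈ -A(x(t)) - ε(t)x(t) and y'(t) ∈ -A(y(t)) - ε(t)y(t) for a.e. t, where ε : [0,∞) → [0,∞) is measurable and locally integrable. Then for all 0 ≤ s ≤ t, ‖x(t) - y(t)‖ ≤ exp(-∫ₛᵗ ε(τ)dτ) ‖x(s) - y(s)‖. -/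
open MeasureTheory Set intervalIntegral
open scoped NNReal ENNReal

lemma primCont {s t : ℝ} {F f : ℝ → ℝ}
    (hF : IntegrableOn F (Set.Ioc s t))
    (hf : ∀ u ∈ Set.Icc s t, f u = f s + ∫ τ in s..u, F τ) :
    ContinuousOn f (Set.Icc s t) := by
  have h1 : IntegrableOn F (Set.Icc s t) := (integrableOn_Icc_iff_integrableOn_Ioc (by finiteness)).mpr hF
  have h2 := intervalIntegral.continuousOn_primitive (f := F) (μ := volume) (a := s) (b := t) h1
  have h3 : ContinuousOn (fun u => f s + ∫ τ in Set.Ioc s u, F τ) (Set.Icc s t) :=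
    continuousOn_const.add h2
  refine h3.congr ?_
  intro u hu
  rw [hf u hu, integral_of_le hu.1]

lemma prodRule {s t : ℝ} (hst : s ≤ t) {F G f g : ℝ → ℝ}
    (hF : IntegrableOn F (Set.Ioc s t)) (hG : IntegrableOn G (Set.Ioc s t))
    (hf : ∀ u ∈ Set.Icc s t, f u = f s + ∫ τ in s..u, F τ)
    (hg : ∀ u ∈ Set.Icc s t, g u = g s + ∫ τ in s..u, G τ) :
    f t * g t = f s * g s + ∫ τ in s..t, (F τ * g τ + f τ * G τ) := by
  set μ := volume.restrict (Set.Ioc s t) with hμdef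
  have hfc : ContinuousOn f (Set.Icc s t) := primCont hF hf
  have hgc : ContinuousOn g (Set.Icc s t) := primCont hG hg
  have hfm : AEStronglyMeasurable f μ :=
    (hfc.mono Set.Ioc_subset_Icc_self).aestronglyMeasurable measurableSet_Ioc
  have hgm : AEStronglyMeasurable g μ :=
    (hgc.mono Set.Ioc_subset_Icc_self).aestronglyMeasurable measurableSet_Ioc
  obtain ⟨Cf, hCf⟩ := isCompact_Icc.exists_bound_of_continuousOn hfc
  obtain ⟨Cg, hCg⟩ := isCompact_Icc.exists_bound_of_continuousOn hgc
  have haeIoc : ∀ᵐ τ ∂μ, τ ∈ Set.Ioc s t := ae_restrict_mem measurableSet_Ioc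
  -- integrability of the two product terms
  have hFg : Integrable (fun τ => F τ * g τ) μ := by
    have := (hF.bdd_mul (c := Cg) hgm ?_ : Integrable (fun τ => g τ * F τ) μ)
    · exact this.congr (Filter.Eventually.of_forall fun τ => mul_comm _ _)
    · filter_upwards [haeIoc] with τ hτ
      exact hCg τ (Set.Ioc_subset_Icc_self hτ)
  have hfG : Integrable (fun τ => f τ * G τ) μ := by
    refine hG.bdd_mul (c := Cf) hfm ?_
    filter_upwards [haeIoc] with τ hτ
    exact hCf τ (Set.Ioc_subset_Icc_self hτ)
  -- the measure is finite etc.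
  -- double integral setup
  set L : ℝ × ℝ → ℝ := fun p => F p.1 * G p.2 with hLdef
  have hL : Integrable L (μ.prod μ) := hF.mul_prod hG
  set S1 : Set (ℝ × ℝ) := {p | p.2 < p.1} with hS1def
  have hS1 : MeasurableSet S1 := measurableSet_lt measurable_snd measurable_fst
  set H : ℝ × ℝ → ℝ := S1.indicator L with hHdef
  have hH : Integrable H (μ.prod μ) := hL.indicator hS1
  set L2 : ℝ × ℝ → ℝ := fun p => G p.1 * F p.2 with hL2def
  have hL2 : Integrable L2 (μ.prod μ) := hG.mul_prod hF
  set S2 : Set (ℝ × ℝ) := {p | p.2 ≤ p.1} with hS2def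
  have hS2 : MeasurableSet S2 := measurableSet_le measurable_snd measurable_fst
  set K : ℝ × ℝ → ℝ := S2.indicator L2 with hKdef
  have hK : Integrable K (μ.prod μ) := hL2.indicator hS2
  -- inner rewriting for the first term
  have inner1 : ∀ τ ∈ Set.Ioc s t,
      F τ * ∫ σ in Set.Ioc s τ, G σ = ∫ σ, H (τ, σ) ∂μ := by
    intro τ hτ
    have e0 : (fun σ => H (τ, σ)) = (Set.Iio τ).indicator (fun σ => F τ * G σ) := by
      funext σ
      by_cases h : σ < τ
      · simp [hHdef, hLdef, hS1def, Set.indicator_apply, h]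
      · simp [hHdef, hLdef, hS1def, Set.indicator_apply, h]
    rw [e0, MeasureTheory.integral_indicator measurableSet_Iio, hμdef,
      Measure.restrict_restrict measurableSet_Iio]
    have e1 : Set.Iio τ ∩ Set.Ioc s t = Set.Ioo s τ := by
      ext σ
      constructor
      · rintro ⟨h1, h2, _⟩; exact ⟨h2, h1⟩
      · rintro ⟨h1, h2⟩; exact ⟨h2, h1, h2.le.trans hτ.2⟩
    rw [e1, MeasureTheory.integral_Ioc_eq_integral_Ioo, MeasureTheory.integral_const_mul]
  -- inner rewriting for the second term
  have inner2 : ∀ σ ∈ Set.Ioc s t,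
      (∫ τ in Set.Ioc s σ, F τ) * G σ = ∫ τ, K (σ, τ) ∂μ := by
    intro σ hσ
    have e0 : (fun τ => K (σ, τ)) = (Set.Iic σ).indicator (fun τ => G σ * F τ) := by
      funext τ
      by_cases h : τ ≤ σ
      · simp [hKdef, hL2def, hS2def, Set.indicator_apply, h]
      · simp [hKdef, hL2def, hS2def, Set.indicator_apply, h]
    rw [e0, MeasureTheory.integral_indicator measurableSet_Iic, hμdef,
      Measure.restrict_restrict measurableSet_Iic]
    have e1 : Set.Iic σ ∩ Set.Ioc s t = Set.Ioc s σ := by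
      ext τ
      constructor
      · rintro ⟨h1, h2, _⟩; exact ⟨h2, h1⟩
      · rintro ⟨h1, h2⟩; exact ⟨h2, h1, h2.trans hσ.2⟩
    rw [e1, MeasureTheory.integral_const_mul, mul_comm]
  -- continuity and boundedness of the primitive of G
  have hGprim_cont : ContinuousOn (fun τ => ∫ σ in Set.Ioc s τ, G σ) (Set.Icc s t) :=
    intervalIntegral.continuousOn_primitive ((integrableOn_Icc_iff_integrableOn_Ioc (by finiteness)).mpr hG)
  have hFprim_cont : ContinuousOn (fun σ => ∫ τ in Set.Ioc s σ, F τ) (Set.Icc s t) :=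
    intervalIntegral.continuousOn_primitive ((integrableOn_Icc_iff_integrableOn_Ioc (by finiteness)).mpr hF)
  have hGprim_bdd : ∀ τ ∈ Set.Ioc s t, ‖∫ σ in Set.Ioc s τ, G σ‖ ≤ ∫ σ in Set.Ioc s t, ‖G σ‖ := by
    intro τ hτ
    refine (MeasureTheory.norm_integral_le_integral_norm _).trans ?_
    refine setIntegral_mono_set hG.norm ?_ ?_
    · exact Filter.Eventually.of_forall fun σ => norm_nonneg _
    · exact (Set.Ioc_subset_Ioc le_rfl hτ.2).eventuallyLE
  have hFprim_bdd : ∀ σ ∈ Set.Ioc s t, ‖∫ τ in Set.Ioc s σ, F τ‖ ≤ ∫ τ in Set.Ioc s t, ‖F τ‖ := by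
    intro σ hσ
    refine (MeasureTheory.norm_integral_le_integral_norm _).trans ?_
    refine setIntegral_mono_set hF.norm ?_ ?_
    · exact Filter.Eventually.of_forall fun τ => norm_nonneg _
    · exact (Set.Ioc_subset_Ioc le_rfl hσ.2).eventuallyLE
  -- integrability of τ ↦ F τ * (prim G τ) and σ ↦ (prim F σ) * G σ
  have hD1i : Integrable (fun τ => F τ * ∫ σ in Set.Ioc s τ, G σ) μ := by
    have hm : AEStronglyMeasurable (fun τ => ∫ σ in Set.Ioc s τ, G σ) μ :=
      (hGprim_cont.mono Set.Ioc_subset_Icc_self).aestronglyMeasurable measurableSet_Ioc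
    have := hF.bdd_mul (c := ∫ σ in Set.Ioc s t, ‖G σ‖) hm ?_
    · exact this.congr (Filter.Eventually.of_forall fun τ => mul_comm _ _)
    · filter_upwards [haeIoc] with τ hτ
      exact hGprim_bdd τ hτ
  have hD2i : Integrable (fun σ => (∫ τ in Set.Ioc s σ, F τ) * G σ) μ := by
    have hm : AEStronglyMeasurable (fun σ => ∫ τ in Set.Ioc s σ, F τ) μ :=
      (hFprim_cont.mono Set.Ioc_subset_Icc_self).aestronglyMeasurable measurableSet_Ioc
    refine hG.bdd_mul (c := ∫ τ in Set.Ioc s t, ‖F τ‖) hm ?_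
    filter_upwards [haeIoc] with σ hσ
    exact hFprim_bdd σ hσ
  -- the first split
  have split1 : ∫ τ, F τ * g τ ∂μ
      = (∫ τ, F τ ∂μ) * g s + ∫ τ, (F τ * ∫ σ in Set.Ioc s τ, G σ) ∂μ := by
    have e1 : ∫ τ, F τ * g τ ∂μ
        = ∫ τ, (F τ * g s + F τ * ∫ σ in Set.Ioc s τ, G σ) ∂μ := by
      refine integral_congr_ae ?_
      filter_upwards [haeIoc] with τ hτ
      rw [hg τ ⟨hτ.1.le, hτ.2⟩, integral_of_le hτ.1.le]
      ring
    rw [e1, integral_add (hF.mul_const _) hD1i, MeasureTheory.integral_mul_const]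
  have split2 : ∫ σ, f σ * G σ ∂μ
      = f s * (∫ σ, G σ ∂μ) + ∫ σ, ((∫ τ in Set.Ioc s σ, F τ) * G σ) ∂μ := by
    have e1 : ∫ σ, f σ * G σ ∂μ
        = ∫ σ, (f s * G σ + (∫ τ in Set.Ioc s σ, F τ) * G σ) ∂μ := by
      refine integral_congr_ae ?_
      filter_upwards [haeIoc] with σ hσ
      rw [hf σ ⟨hσ.1.le, hσ.2⟩, integral_of_le hσ.1.le]
      ring
    rw [e1, integral_add (hG.const_mul _) hD2i, MeasureTheory.integral_const_mul]
  -- convert double integrals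
  have D1eq : ∫ τ, (F τ * ∫ σ in Set.Ioc s τ, G σ) ∂μ = ∫ p, H p ∂(μ.prod μ) := by
    have e1 : ∫ τ, (F τ * ∫ σ in Set.Ioc s τ, G σ) ∂μ = ∫ τ, ∫ σ, H (τ, σ) ∂μ ∂μ := by
      refine integral_congr_ae ?_
      filter_upwards [haeIoc] with τ hτ
      exact inner1 τ hτ
    rw [e1]
    exact MeasureTheory.integral_integral hH
  have D2eq : ∫ σ, ((∫ τ in Set.Ioc s σ, F τ) * G σ) ∂μ = ∫ q, K q ∂(μ.prod μ) := by
    have e1 : ∫ σ, ((∫ τ in Set.Ioc s σ, F τ) * G σ) ∂μ = ∫ σ, ∫ τ, K (σ, τ) ∂μ ∂μ := by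
      refine integral_congr_ae ?_
      filter_upwards [haeIoc] with σ hσ
      exact inner2 σ hσ
    rw [e1]
    exact MeasureTheory.integral_integral hK
  -- swap the second double integral
  have Kswap : ∫ q, K q ∂(μ.prod μ) = ∫ p, K (Prod.swap p) ∂(μ.prod μ) := by
    have hmap : (μ.prod μ) = Measure.map Prod.swap (μ.prod μ) := (Measure.prod_swap).symm
    conv_lhs => rw [hmap]
    rw [integral_map measurable_swap.aemeasurable]
    rw [← hmap]
    exact hK.1
  have hKswapInt : Integrable (fun p => K (Prod.swap p)) (μ.prod μ) := by
    have hmap : (μ.prod μ) = Measure.map Prod.swap (μ.prod μ) := (Measure.prod_swap).symm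
    rw [hmap] at hK
    exact (integrable_map_measure (hmap ▸ hK.1) measurable_swap.aemeasurable).mp hK
  -- sum of the two double integrals
  have sum_eq : (∫ p, H p ∂(μ.prod μ)) + ∫ p, K (Prod.swap p) ∂(μ.prod μ)
      = (∫ τ, F τ ∂μ) * (∫ σ, G σ ∂μ) := by
    rw [← integral_add hH hKswapInt]
    have e1 : ∀ p : ℝ × ℝ, H p + K (Prod.swap p) = F p.1 * G p.2 := by
      rintro ⟨τ, σ⟩
      by_cases h : σ < τ
      · simp [hHdef, hKdef, hLdef, hL2def, hS1def, hS2def, Set.indicator_apply, h, not_le.mpr h]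
      · simp [hHdef, hKdef, hLdef, hL2def, hS1def, hS2def, Set.indicator_apply, h, not_lt.mp h,
          mul_comm]
    simp_rw [e1]
    exact integral_prod_mul F G
  -- totals
  have hft : ∫ τ, F τ ∂μ = f t - f s := by
    have := hf t ⟨hst, le_rfl⟩
    rw [integral_of_le hst] at this
    rw [hμdef]; linarith
  have hgt : ∫ σ, G σ ∂μ = g t - g s := by
    have := hg t ⟨hst, le_rfl⟩
    rw [integral_of_le hst] at this
    rw [hμdef]; linarith
  have total : ∫ τ in s..t, (F τ * g τ + f τ * G τ)
      = (∫ τ, F τ * g τ ∂μ) + ∫ τ, f τ * G τ ∂μ := by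
    rw [integral_of_le hst, hμdef]
    exact integral_add (hμdef ▸ hFg) (hμdef ▸ hfG)
  rw [total, split1, split2, D1eq, D2eq, Kswap]
  have : (∫ p, H p ∂(μ.prod μ)) + ∫ p, K (Prod.swap p) ∂(μ.prod μ)
      = (f t - f s) * (g t - g s) := by rw [sum_eq, hft, hgt]
  rw [hft, hgt]
  nlinarith [this]

lemma powRule {s t : ℝ} (hst : s ≤ t) {ε : ℝ → ℝ}
    (hεi : IntegrableOn ε (Set.Ioc s t)) :
    ∀ n : ℕ, ∀ u ∈ Set.Icc s t,
      (∫ τ in s..u, ε τ) ^ (n + 1)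
        = ∫ τ in s..u, (((n : ℝ) + 1) * ε τ * (∫ σ in s..τ, ε σ) ^ n) := by
  set E : ℝ → ℝ := fun v => ∫ σ in s..v, ε σ with hEdef
  have hEs : E s = 0 := intervalIntegral.integral_same
  have hE : ∀ u ∈ Set.Icc s t, E u = E s + ∫ τ in s..u, ε τ := by
    intro u hu; rw [hEs, zero_add]
  have hEc : ContinuousOn E (Set.Icc s t) := primCont hεi hE
  obtain ⟨C, hC⟩ := isCompact_Icc.exists_bound_of_continuousOn hEc
  intro n
  induction n with
  | zero =>
    intro u hu
    simp only [pow_one, Nat.cast_zero, zero_add, pow_zero, mul_one, one_mul]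
  | succ n ih =>
    intro u hu
    have hsu : s ≤ u := hu.1
    have hεiu : IntegrableOn ε (Set.Ioc s u) := hεi.mono_set (Set.Ioc_subset_Ioc le_rfl hu.2)
    have hsub : Set.Icc s u ⊆ Set.Icc s t := Set.Icc_subset_Icc le_rfl hu.2
    -- integrability of the power integrand
    have hGint : IntegrableOn (fun τ => ((n : ℝ) + 1) * ε τ * E τ ^ n) (Set.Ioc s u) := by
      have hm : AEStronglyMeasurable (fun τ => ((n : ℝ) + 1) * E τ ^ n)
          (volume.restrict (Set.Ioc s u)) := by
        have : ContinuousOn (fun τ => ((n : ℝ) + 1) * E τ ^ n) (Set.Ioc s u) :=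
          (continuousOn_const.mul ((hEc.mono (Set.Ioc_subset_Icc_self.trans hsub)).pow n))
        exact this.aestronglyMeasurable measurableSet_Ioc
      have hb : ∀ᵐ τ ∂(volume.restrict (Set.Ioc s u)),
          ‖((n : ℝ) + 1) * E τ ^ n‖ ≤ ((n : ℝ) + 1) * C ^ n := by
        filter_upwards [ae_restrict_mem measurableSet_Ioc] with τ hτ
        have h1 : ‖E τ‖ ≤ C := hC τ (hsub (Set.Ioc_subset_Icc_self hτ))
        have h0 : (0:ℝ) ≤ C := (norm_nonneg _).trans h1
        rw [norm_mul, norm_pow]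
        have : ‖((n : ℝ) + 1)‖ = (n : ℝ) + 1 := by
          rw [Real.norm_eq_abs, abs_of_nonneg]; positivity
        rw [this]
        gcongr
      have := hεiu.bdd_mul (c := ((n : ℝ) + 1) * C ^ n) hm hb
      exact this.congr (Filter.Eventually.of_forall fun τ => by ring)
    have key := prodRule hsu (hεiu) hGint
      (f := E) (g := fun v => E v ^ (n + 1))
      (fun v hv => hE v (hsub hv))
      (fun v hv => by
        show E v ^ (n + 1) = E s ^ (n + 1) + ∫ τ in s..v, (((n : ℝ) + 1) * ε τ * E τ ^ n)
        rw [hEs, zero_pow (Nat.succ_ne_zero n), zero_add]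
        exact ih v (hsub hv))
    rw [hEs, zero_pow (Nat.succ_ne_zero n), mul_zero, zero_add] at key
    have lhs_eq : E u * E u ^ (n + 1) = E u ^ (n + 1 + 1) := by ring
    rw [lhs_eq] at key
    rw [key]
    refine intervalIntegral.integral_congr fun τ _ => ?_
    push_cast
    ring

lemma expRule {s t : ℝ} (hst : s ≤ t) {ε : ℝ → ℝ} (hεm : Measurable ε)
    (hεi : IntegrableOn ε (Set.Ioc s t)) :
    ∀ u ∈ Set.Icc s t,
      Real.exp (2 * ∫ τ in s..u, ε τ)
        = 1 + ∫ τ in s..u, (2 * ε τ * Real.exp (2 * ∫ σ in s..τ, ε σ)) := by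
  set E : ℝ → ℝ := fun v => ∫ σ in s..v, ε σ with hEdef
  have hEs : E s = 0 := intervalIntegral.integral_same
  have hE : ∀ u ∈ Set.Icc s t, E u = E s + ∫ τ in s..u, ε τ := by
    intro u hu; rw [hEs, zero_add]
  have hEc : ContinuousOn E (Set.Icc s t) := primCont hεi hE
  obtain ⟨C, hC⟩ := isCompact_Icc.exists_bound_of_continuousOn hEc
  have hC0 : (0:ℝ) ≤ C := (norm_nonneg _).trans (hC s ⟨le_rfl, hst⟩)
  intro u hu
  have hsu : s ≤ u := hu.1
  set μ' := volume.restrict (Set.Ioc s u) with hμ'def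
  have hεiu : IntegrableOn ε (Set.Ioc s u) := hεi.mono_set (Set.Ioc_subset_Ioc le_rfl hu.2)
  have hsub : Set.Ioc s u ⊆ Set.Icc s t :=
    Set.Ioc_subset_Icc_self.trans (Set.Icc_subset_Icc le_rfl hu.2)
  set f : ℕ → ℝ → ℝ := fun n τ => 2 ^ (n+1) / (n.factorial : ℝ) * (ε τ * E τ ^ n) with hfdef
  -- pointwise expansion of the integrand
  have hplain : ∀ τ : ℝ, 2 * ε τ * Real.exp (2 * E τ) = ∑' n : ℕ, f n τ := by
    intro τ
    rw [Real.exp_eq_exp_ℝ, NormedSpace.exp_eq_tsum_div]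
    rw [← tsum_mul_left]
    refine tsum_congr fun n => ?_
    have hfac : ((n.factorial : ℝ)) ≠ 0 := by positivity
    simp only [hfdef]
    field_simp
    ring
  -- summability bound
  have hEbdd : ∀ᵐ τ ∂μ', ∀ n : ℕ,
      ‖f n τ‖₊ ≤ Real.toNNReal (2 ^ (n+1) / (n.factorial : ℝ) * C ^ n) * ‖ε τ‖₊ := by
    filter_upwards [ae_restrict_mem measurableSet_Ioc] with τ hτ
    intro n
    have h1 : ‖E τ‖ ≤ C := hC τ (hsub hτ)
    rw [← NNReal.coe_le_coe]
    rw [NNReal.coe_mul, Real.coe_toNNReal _ (by positivity), coe_nnnorm, coe_nnnorm]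
    have hnorm : ‖f n τ‖ = 2 ^ (n+1) / (n.factorial : ℝ) * (‖ε τ‖ * ‖E τ‖ ^ n) := by
      simp only [hfdef, norm_mul, norm_div, norm_pow, Real.norm_ofNat, Real.norm_natCast]
    rw [hnorm]
    calc 2 ^ (n+1) / (n.factorial : ℝ) * (‖ε τ‖ * ‖E τ‖ ^ n)
        ≤ 2 ^ (n+1) / (n.factorial : ℝ) * (‖ε τ‖ * C ^ n) := by
          gcongr
      _ = 2 ^ (n+1) / (n.factorial : ℝ) * C ^ n * ‖ε τ‖ := by ring
  -- measurability of each f n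
  have hEm : AEMeasurable E μ' :=
    ((hEc.mono hsub).aestronglyMeasurable measurableSet_Ioc).aemeasurable
  have hfm : ∀ n : ℕ, AEStronglyMeasurable (f n) μ' := by
    intro n
    have h1 : AEMeasurable (fun τ => 2 ^ (n+1) / (n.factorial : ℝ) * (ε τ * E τ ^ n)) μ' :=
      aemeasurable_const.mul (hεm.aemeasurable.mul (hEm.pow_const n))
    exact h1.aestronglyMeasurable
  have hLε : (∫⁻ τ, ‖ε τ‖₊ ∂μ') ≠ ⊤ := hεiu.2.ne
  set a : ℕ → ℝ≥0 := fun n => Real.toNNReal (2 ^ (n+1) / (n.factorial : ℝ) * C ^ n) with hadef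
  have hasum : Summable a := by
    rw [← NNReal.summable_coe]
    have h2 : Summable (fun n : ℕ => 2 * ((2*C) ^ n / (n.factorial : ℝ))) :=
      (Real.summable_pow_div_factorial (2*C)).mul_left 2
    refine Summable.congr h2 fun n => ?_
    rw [hadef]
    dsimp only
    rw [Real.coe_toNNReal _ (by positivity), mul_pow]
    ring
  have hbound : ∑' n, ∫⁻ τ, ‖f n τ‖₊ ∂μ' ≠ ⊤ := by
    have step : ∀ n : ℕ, ∫⁻ τ, ‖f n τ‖₊ ∂μ' ≤ (a n : ℝ≥0∞) * ∫⁻ τ, ‖ε τ‖₊ ∂μ' := by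
      intro n
      have h3 : ∫⁻ τ, ‖f n τ‖₊ ∂μ' ≤ ∫⁻ τ, (a n : ℝ≥0∞) * ‖ε τ‖₊ ∂μ' := by
        refine lintegral_mono_ae ?_
        filter_upwards [hEbdd] with τ hτ
        calc (‖f n τ‖₊ : ℝ≥0∞) ≤ ((a n * ‖ε τ‖₊ : ℝ≥0) : ℝ≥0∞) := ENNReal.coe_le_coe.mpr (hτ n)
          _ = (a n : ℝ≥0∞) * ‖ε τ‖₊ := by rw [ENNReal.coe_mul]
      rwa [lintegral_const_mul' _ _ ENNReal.coe_ne_top] at h3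
    refine ne_top_of_le_ne_top ?_ (ENNReal.tsum_le_tsum step)
    rw [ENNReal.tsum_mul_right]
    exact ENNReal.mul_ne_top (by rw [← ENNReal.coe_tsum hasum]; exact ENNReal.coe_ne_top) hLε
  have hswap : ∫ τ, (∑' n, f n τ) ∂μ' = ∑' n, ∫ τ, f n τ ∂μ' := integral_tsum hfm hbound
  -- value of each integral
  have hval : ∀ n : ℕ, ∫ τ, f n τ ∂μ' = (2 * E u) ^ (n+1) / (((n+1).factorial : ℕ) : ℝ) := by
    intro n
    have hp := powRule hst hεi n u hu
    have hpull : (∫ τ in s..u, (((n : ℝ) + 1) * ε τ * (∫ σ in s..τ, ε σ) ^ n))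
        = ((n:ℝ)+1) * ∫ τ in s..u, (ε τ * E τ ^ n) := by
      rw [← intervalIntegral.integral_const_mul]
      refine intervalIntegral.integral_congr fun τ _ => by ring
    rw [hpull] at hp
    have hI : ∫ τ in s..u, (ε τ * E τ ^ n) = E u ^ (n+1) / ((n:ℝ)+1) := by
      have hne : ((n:ℝ)+1) ≠ 0 := by positivity
      field_simp
      linarith [hp]
    have hft : ∫ τ, f n τ ∂μ' = 2 ^ (n+1) / (n.factorial : ℝ) * ∫ τ in s..u, (ε τ * E τ ^ n) := by
      rw [← intervalIntegral.integral_const_mul, intervalIntegral.integral_of_le hsu]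
    rw [hft, hI]
    have hfac : (((n+1).factorial : ℕ) : ℝ) = ((n:ℝ)+1) * (n.factorial : ℝ) := by
      rw [Nat.factorial_succ]
      push_cast
      ring
    rw [hfac, mul_pow]
    have h1 : ((n:ℝ)+1) ≠ 0 := by positivity
    have h2 : (n.factorial : ℝ) ≠ 0 := by positivity
    field_simp
    try ring
    try exact Or.inl trivial
  -- assemble
  have hexp : ∀ v : ℝ, Real.exp v = ∑' n : ℕ, v ^ n / (n.factorial : ℝ) := by
    intro v
    rw [Real.exp_eq_exp_ℝ, NormedSpace.exp_eq_tsum_div]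
  have hmain : (∫ τ in s..u, (2 * ε τ * Real.exp (2 * E τ))) = Real.exp (2 * E u) - 1 := by
    rw [intervalIntegral.integral_of_le hsu]
    calc ∫ τ in Set.Ioc s u, (2 * ε τ * Real.exp (2 * E τ))
        = ∫ τ, (∑' n, f n τ) ∂μ' := by
          exact integral_congr_ae (Filter.Eventually.of_forall fun τ => hplain τ)
      _ = ∑' n, ∫ τ, f n τ ∂μ' := hswap
      _ = ∑' n : ℕ, (2 * E u) ^ (n+1) / (((n+1).factorial : ℕ) : ℝ) := tsum_congr hval
      _ = Real.exp (2 * E u) - 1 := by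
          have hs2 : Summable (fun n : ℕ => (2 * E u) ^ n / (n.factorial : ℝ)) :=
            Real.summable_pow_div_factorial _
          have h0 := hs2.tsum_eq_zero_add
          rw [hexp (2 * E u), h0]
          norm_num [Nat.factorial_zero]
  rw [hmain]
  ring


/-- A set-valued operator is monotone. -/
def IsMonotoneOp {E : Type*} [NormedAddCommGroup E] [InnerProductSpace ℝ E]
    (A : E → Set E) : Prop :=
  ∀ ⦃x u y v⦄, u ∈ A x → v ∈ A y → 0 ≤ (inner ℝ (u - v) (x - y) : ℝ)

/-- A set-valued operator is maximal monotone. -/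
def IsMaximalMonotoneOp {E : Type*} [NormedAddCommGroup E] [InnerProductSpace ℝ E]
    (A : E → Set E) : Prop :=
  IsMonotoneOp A ∧
    ∀ x u, (∀ y v, v ∈ A y → 0 ≤ (inner ℝ (u - v) (x - y) : ℝ)) → u ∈ A x

/-- contraction estimate for the Tikhonov-regularized flow
`x' ∈ -A(x) - ε(t)x`.  Absolutely continuous solutions are encoded via
locally integrable derivatives with the integral representation. -/
theorem stmt_13 (d : ℕ) (A : EuclideanSpace ℝ (Fin d) → Set (EuclideanSpace ℝ (Fin d)))
    (hA : IsMaximalMonotoneOp A)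
    (ε : ℝ → ℝ) (hεmeas : Measurable ε) (hεnn : ∀ t, 0 ≤ t → 0 ≤ ε t)
    (hεloc : LocallyIntegrable ε volume)
    (x y x' y' : ℝ → EuclideanSpace ℝ (Fin d))
    (hx'loc : LocallyIntegrable x' volume) (hy'loc : LocallyIntegrable y' volume)
    (hxac : ∀ t, 0 ≤ t → x t = x 0 + ∫ s in (0:ℝ)..t, x' s)
    (hyac : ∀ t, 0 ≤ t → y t = y 0 + ∫ s in (0:ℝ)..t, y' s)
    (hxA : ∀ᵐ t ∂(volume.restrict (Set.Ici (0:ℝ))), -x' t - ε t • x t ∈ A (x t))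
    (hyA : ∀ᵐ t ∂(volume.restrict (Set.Ici (0:ℝ))), -y' t - ε t • y t ∈ A (y t)) :
    ∀ s t, 0 ≤ s → s ≤ t →
      ‖x t - y t‖ ≤ Real.exp (-(∫ τ in s..t, ε τ)) * ‖x s - y s‖ := by
  intro s t hs hst
  set z : ℝ → EuclideanSpace ℝ (Fin d) := fun u => x u - y u with hzdef
  set w : ℝ → EuclideanSpace ℝ (Fin d) := fun u => x' u - y' u with hwdef
  have hwloc : LocallyIntegrable w volume := hx'loc.sub hy'loc
  have hInt : ∀ (v : ℝ → EuclideanSpace ℝ (Fin d)), LocallyIntegrable v volume →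
      ∀ a b : ℝ, IntervalIntegrable v volume a b := fun v hv a b =>
    (hv.integrableOn_isCompact isCompact_uIcc).intervalIntegrable
  -- z is a primitive of w
  have hz : ∀ u ∈ Set.Icc s t, z u = z s + ∫ τ in s..u, w τ := by
    intro u hu
    have hu0 : (0:ℝ) ≤ u := le_trans hs hu.1
    have h1 : x u = x s + ∫ τ in s..u, x' τ := by
      rw [hxac u hu0, hxac s hs, ← intervalIntegral.integral_add_adjacent_intervals
        (hInt x' hx'loc 0 s) (hInt x' hx'loc s u)]
      abel
    have h2 : y u = y s + ∫ τ in s..u, y' τ := by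
      rw [hyac u hu0, hyac s hs, ← intervalIntegral.integral_add_adjacent_intervals
        (hInt y' hy'loc 0 s) (hInt y' hy'loc s u)]
      abel
    have h3 : (∫ τ in s..u, w τ) = (∫ τ in s..u, x' τ) - ∫ τ in s..u, y' τ := by
      rw [hwdef]
      exact intervalIntegral.integral_sub (hInt x' hx'loc s u) (hInt y' hy'loc s u)
    simp only [hzdef]
    rw [h1, h2, h3]
    abel
  -- coordinates
  have hwii : ∀ (i : Fin d) (a b : ℝ), IntervalIntegrable (fun τ => w τ i) volume a b := by
    intro i a b
    have h := hInt w hwloc a b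
    constructor
    · exact (EuclideanSpace.proj (𝕜 := ℝ) i).integrable_comp h.1
    · exact (EuclideanSpace.proj (𝕜 := ℝ) i).integrable_comp h.2
  have hzi : ∀ (i : Fin d), ∀ u ∈ Set.Icc s t,
      z u i = z s i + ∫ τ in s..u, (fun τ' => w τ' i) τ := by
    intro i u hu
    have happ := congrArg (fun v : EuclideanSpace ℝ (Fin d) => v i) (hz u hu)
    simp only [PiLp.add_apply] at happ
    rw [happ]
    congr 1
    exact ((EuclideanSpace.proj (𝕜 := ℝ) i).intervalIntegral_comp_comm (hInt w hwloc s u)).symm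
  have hzic : ∀ i : Fin d, ContinuousOn (fun τ => z τ i) (Set.Icc s t) := by
    intro i
    exact primCont (hwii i s t).1 (hzi i)
  -- φ and ψ
  set φ : ℝ → ℝ := fun u => ‖z u‖ ^ 2 with hφdef
  set ψ : ℝ → ℝ := fun τ => ∑ i : Fin d, 2 * w τ i * z τ i with hψdef
  have hψii : ∀ u ∈ Set.Icc s t, IntervalIntegrable ψ volume s u := by
    intro u hu
    have hterm : ∀ i : Fin d, IntervalIntegrable (fun τ => 2 * w τ i * z τ i) volume s u := by
      intro i
      have hc : ContinuousOn (fun τ => 2 * z τ i) (Set.uIcc s u) := by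
        rw [Set.uIcc_of_le hu.1]
        exact (continuousOn_const.mul (hzic i)).mono (Set.Icc_subset_Icc le_rfl hu.2)
      have h1 := (hwii i s u).continuousOn_mul hc
      refine IntervalIntegrable.congr_ae h1 ?_
      refine Filter.EventuallyEq.of_eq (funext fun τ => by ring)
    have hsum : IntervalIntegrable (∑ i : Fin d, fun τ => 2 * w τ i * z τ i) volume s u :=
      IntervalIntegrable.sum Finset.univ (fun i _ => hterm i)
    have he : ψ = ∑ i : Fin d, (fun τ => 2 * w τ i * z τ i) := by
      funext τ
      rw [hψdef, Finset.sum_apply]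
    rw [he]
    exact hsum
  -- φ written as a coordinate sum
  have hnormsum : ∀ v : ℝ, φ v = ∑ i : Fin d, z v i * z v i := by
    intro v
    rw [hφdef]
    dsimp only
    rw [EuclideanSpace.norm_eq, Real.sq_sqrt (by positivity)]
    refine Finset.sum_congr rfl fun i _ => ?_
    rw [Real.norm_eq_abs, sq_abs, sq]
  -- φ is a primitive of ψ
  have hφprim : ∀ u ∈ Set.Icc s t, φ u = φ s + ∫ τ in s..u, ψ τ := by
    intro u hu
    have hsub : Set.Icc s u ⊆ Set.Icc s t := Set.Icc_subset_Icc le_rfl hu.2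
    have hcoord : ∀ i : Fin d, z u i * z u i
        = z s i * z s i + ∫ τ in s..u, ((w τ i) * (z τ i) + (z τ i) * (w τ i)) := by
      intro i
      exact prodRule hu.1 (hwii i s u).1 (hwii i s u).1
        (fun v hv => hzi i v (hsub hv)) (fun v hv => hzi i v (hsub hv))
    have hterm2 : ∀ i : Fin d,
        IntervalIntegrable (fun τ => (w τ i) * (z τ i) + (z τ i) * (w τ i)) volume s u := by
      intro i
      have hc : ContinuousOn (fun τ => z τ i) (Set.uIcc s u) := by
        rw [Set.uIcc_of_le hu.1]
        exact (hzic i).mono (Set.Icc_subset_Icc le_rfl hu.2)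
      exact ((hwii i s u).mul_continuousOn hc).add ((hwii i s u).continuousOn_mul hc)
    calc φ u = ∑ i : Fin d, z u i * z u i := hnormsum u
      _ = ∑ i : Fin d, (z s i * z s i + ∫ τ in s..u, ((w τ i) * (z τ i) + (z τ i) * (w τ i))) :=
          Finset.sum_congr rfl fun i _ => hcoord i
      _ = (∑ i : Fin d, z s i * z s i)
          + ∑ i : Fin d, ∫ τ in s..u, ((w τ i) * (z τ i) + (z τ i) * (w τ i)) :=
          Finset.sum_add_distrib
      _ = φ s + ∫ τ in s..u, ψ τ := by
          rw [← hnormsum s, ← intervalIntegral.integral_finset_sum (fun i _ => hterm2 i)]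
          congr 1
          refine intervalIntegral.integral_congr fun τ _ => ?_
          rw [hψdef]
          refine Finset.sum_congr rfl fun i _ => by ring
  -- a.e. differential inequality from monotonicity
  have hae : ∀ᵐ τ ∂(volume.restrict (Set.Ioc s t)), ψ τ + 2 * ε τ * φ τ ≤ 0 := by
    have hsubI : Set.Ioc s t ⊆ Set.Ici (0:ℝ) := fun τ hτ => le_of_lt (lt_of_le_of_lt hs hτ.1)
    filter_upwards [ae_restrict_of_ae_restrict_of_subset hsubI hxA,
      ae_restrict_of_ae_restrict_of_subset hsubI hyA] with τ h1 h2
    have h3 := hA.1 h1 h2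
    have e1 : -x' τ - ε τ • x τ - (-y' τ - ε τ • y τ) = -(w τ) - ε τ • z τ := by
      simp only [hwdef, hzdef, smul_sub]
      abel
    rw [e1] at h3
    have e2 : x τ - y τ = z τ := rfl
    rw [e2] at h3
    have e3 : (inner ℝ (-(w τ) - ε τ • z τ) (z τ) : ℝ)
        = -(inner ℝ (w τ) (z τ) : ℝ) - ε τ * ‖z τ‖ ^ 2 := by
      rw [inner_sub_left, inner_neg_left, real_inner_smul_left, real_inner_self_eq_norm_sq]
    rw [e3] at h3
    have e4 : ψ τ = 2 * (inner ℝ (w τ) (z τ) : ℝ) := by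
      rw [hψdef]
      dsimp only
      rw [PiLp.inner_apply, Finset.mul_sum]
      refine Finset.sum_congr rfl fun i _ => ?_
      simp only [RCLike.inner_apply, conj_trivial]
      ring
    rw [e4, hφdef]
    dsimp only
    nlinarith [h3]
  -- exponential integrating factor
  have hεint : IntegrableOn ε (Set.Ioc s t) :=
    (hεloc.integrableOn_isCompact isCompact_Icc).mono_set Set.Ioc_subset_Icc_self
  have hEs0 : (∫ σ in s..s, ε σ) = 0 := intervalIntegral.integral_same
  have hexpPrim := expRule hst hεmeas hεint
  have hEcont : ContinuousOn (fun v => ∫ σ in s..v, ε σ) (Set.Icc s t) :=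
    primCont hεint (fun v _ => by rw [hEs0, zero_add])
  have hεii : IntervalIntegrable ε volume s t :=
    (hεloc.integrableOn_isCompact isCompact_uIcc).intervalIntegrable
  have hFii : IntervalIntegrable
      (fun τ => 2 * ε τ * Real.exp (2 * ∫ σ in s..τ, ε σ)) volume s t := by
    have hc : ContinuousOn (fun τ => 2 * Real.exp (2 * ∫ σ in s..τ, ε σ)) (Set.uIcc s t) := by
      rw [Set.uIcc_of_le hst]
      exact continuousOn_const.mul
        (Real.continuous_exp.comp_continuousOn (continuousOn_const.mul hEcont))
    have h1 := hεii.continuousOn_mul hc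
    exact IntervalIntegrable.congr_ae h1 (Filter.EventuallyEq.of_eq (funext fun τ => by ring))
  have hfprim : ∀ v ∈ Set.Icc s t, Real.exp (2 * ∫ σ in s..v, ε σ)
      = Real.exp (2 * ∫ σ in s..s, ε σ)
        + ∫ τ in s..v, (2 * ε τ * Real.exp (2 * ∫ σ in s..τ, ε σ)) := by
    intro v hv
    rw [hEs0, mul_zero, Real.exp_zero]
    exact hexpPrim v hv
  have key := prodRule hst hFii.1 (hψii t ⟨hst, le_rfl⟩).1
    (f := fun v => Real.exp (2 * ∫ σ in s..v, ε σ)) (g := φ) hfprim hφprim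
  rw [hEs0, mul_zero, Real.exp_zero, one_mul] at key
  -- the integral term is nonpositive
  have hneg : (∫ τ in s..t, ((2 * ε τ * Real.exp (2 * ∫ σ in s..τ, ε σ)) * φ τ
      + Real.exp (2 * ∫ σ in s..τ, ε σ) * ψ τ)) ≤ 0 := by
    rw [intervalIntegral.integral_of_le hst]
    refine integral_nonpos_of_ae ?_
    filter_upwards [hae] with τ hτ
    have he := (Real.exp_pos (2 * ∫ σ in s..τ, ε σ)).le
    have h6 := mul_le_mul_of_nonneg_left hτ he
    rw [mul_zero] at h6
    have h7 : (2 * ε τ * Real.exp (2 * ∫ σ in s..τ, ε σ)) * φ τ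
        + Real.exp (2 * ∫ σ in s..τ, ε σ) * ψ τ
        = Real.exp (2 * ∫ σ in s..τ, ε σ) * (ψ τ + 2 * ε τ * φ τ) := by ring
    rw [h7]
    exact h6
  have h5 : Real.exp (2 * ∫ σ in s..t, ε σ) * φ t ≤ φ s := by
    rw [key]
    linarith [hneg]
  -- conclude
  have hφt : φ t ≤ Real.exp (-(2 * ∫ σ in s..t, ε σ)) * φ s := by
    have hp := Real.exp_pos (2 * ∫ σ in s..t, ε σ)
    rw [Real.exp_neg, inv_mul_eq_div, le_div_iff₀ hp]
    nlinarith [h5]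
  have hsq : ‖z t‖ ^ 2 ≤ (Real.exp (-(∫ τ in s..t, ε τ)) * ‖z s‖) ^ 2 := by
    have e5 : (Real.exp (-(∫ τ in s..t, ε τ)) * ‖z s‖) ^ 2
        = Real.exp (-(2 * ∫ σ in s..t, ε σ)) * φ s := by
      rw [mul_pow, hφdef]
      dsimp only
      rw [sq (Real.exp _), ← Real.exp_add]
      ring_nf
    rw [e5]
    exact hφt
  have hfin : ‖z t‖ ≤ Real.exp (-(∫ τ in s..t, ε τ)) * ‖z s‖ := by
    calc ‖z t‖ = Real.sqrt (‖z t‖ ^ 2) := (Real.sqrt_sq (norm_nonneg _)).symm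
      _ ≤ Real.sqrt ((Real.exp (-(∫ τ in s..t, ε τ)) * ‖z s‖) ^ 2) := Real.sqrt_le_sqrt hsq
      _ = Real.exp (-(∫ τ in s..t, ε τ)) * ‖z s‖ := Real.sqrt_sq (by positivity)
  exact hfin
end

section
/- Let φ : ℝ^d → ℝ ∪ {∞} be proper, convex, lower semicontinuous with argmin φ ≠ ∅, and suppose there exist p ≥ 1, γ > 0, and r > min φ such that φ(x) - min φ ≥ γ · d(x; argmin φ)^p for all x in the sublevel set {φ ≤ r}. For η > 0 let x_η be the unique minimizer of x ↦ φ(x) + (η/2)‖x‖², i.e. -η x_η ∈ ∂φ(x_η). Then there exist constants C* > 0 and η₀ > 0 such that ‖x_η - x*‖² ≤ C* η^{1/p} for all 0 < η ≤ η₀, where x* := proj_{argmin φ}(0). -/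
open InnerProductSpace


set_option maxHeartbeats 1000000 in
/-- under a Hölderian error bound on the solution set, the
Tikhonov regularization path `x_η` (defined by `-η x_η ∈ ∂φ(x_η)`) converges to
the minimal-norm minimizer `x*` with rate `‖x_η - x*‖² ≤ C* η^{1/p}`. -/
theorem stmt_14 (d : ℕ) (φ : EuclideanSpace ℝ (Fin d) → EReal)
    (hproper : (∃ z, φ z ≠ ⊤) ∧ ∀ z, φ z ≠ ⊥)
    (hconv : ∀ z w : EuclideanSpace ℝ (Fin d), ∀ a b : ℝ, 0 ≤ a → 0 ≤ b →
      a + b = 1 → φ (a • z + b • w) ≤ (a : EReal) * φ z + (b : EReal) * φ w)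
    (hlsc : LowerSemicontinuous φ)
    (S : Set (EuclideanSpace ℝ (Fin d))) (hSdef : S = {z | ∀ w, φ z ≤ φ w})
    (hSne : S.Nonempty)
    (xstar : EuclideanSpace ℝ (Fin d)) (hxstarS : xstar ∈ S)
    (hxstarmin : ∀ z ∈ S, ‖xstar‖ ≤ ‖z‖)
    (p γ r : ℝ) (hp : 1 ≤ p) (hγ : 0 < γ) (hr : φ xstar < (r : EReal))
    (heb : ∀ z, φ z ≤ (r : EReal) →
      φ xstar + ((γ * Metric.infDist z S ^ p : ℝ) : EReal) ≤ φ z)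
    (xc : ℝ → EuclideanSpace ℝ (Fin d))
    (hxc : ∀ η : ℝ, 0 < η → ∀ w,
      φ (xc η) + ((inner ℝ (-(η • xc η)) (w - xc η) : ℝ) : EReal) ≤ φ w) :
    ∃ C > 0, ∃ η₀ > 0, ∀ η : ℝ, 0 < η → η ≤ η₀ →
      ‖xc η - xstar‖ ^ 2 ≤ C * η ^ (1 / p) := by
  obtain ⟨hpt, hpb⟩ := hproper
  have hmin : ∀ z ∈ S, ∀ w, φ z ≤ φ w := by
    intro z hz; rw [hSdef] at hz; exact hz
  have hp0 : (0 : ℝ) < p := lt_of_lt_of_le one_pos hp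
  -- the minimal value is a real number m
  have hmne_top : φ xstar ≠ ⊤ := (hr.trans_le le_top).ne
  set m : ℝ := (φ xstar).toReal with hm
  have hφx : φ xstar = (m : EReal) := (EReal.coe_toReal hmne_top (hpb xstar)).symm
  have hmr : m < r := by rwa [hφx, EReal.coe_lt_coe_iff] at hr
  set B : ℝ := ‖xstar‖ with hB
  have hB0 : 0 ≤ B := norm_nonneg _
  -- S is closed and convex
  have hSclosed : IsClosed S := by
    have : S = ⋂ w, φ ⁻¹' Set.Iic (φ w) := by
      rw [hSdef]; ext z; simp [Set.mem_iInter]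
    rw [this]
    exact isClosed_iInter fun w => hlsc.isClosed_preimage (φ w)
  have hφS : ∀ z ∈ S, φ z = (m : EReal) := by
    intro z hz
    exact le_antisymm (hφx ▸ hmin z hz xstar) (hφx ▸ hmin xstar hxstarS z)
  have hSconv : Convex ℝ S := by
    intro z hz w hw a b ha hb hab
    rw [hSdef]
    intro w'
    calc φ (a • z + b • w) ≤ (a : EReal) * φ z + (b : EReal) * φ w :=
          hconv z w a b ha hb hab
      _ = ((a * m + b * m : ℝ) : EReal) := by
          rw [hφS z hz, hφS w hw, ← EReal.coe_mul, ← EReal.coe_mul, EReal.coe_add]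
      _ = (m : EReal) := by
          congr 1
          have : a * m + b * m = (a + b) * m := by ring
          rw [this, hab, one_mul]
      _ = φ xstar := hφx.symm
      _ ≤ φ w' := hmin xstar hxstarS w'
  -- variational inequality for the projection of 0 onto S
  have hproj : ∀ s ∈ S, (0 : ℝ) ≤ ⟪xstar, s - xstar⟫_ℝ := by
    have hiInf : ‖(0 : EuclideanSpace ℝ (Fin d)) - xstar‖ = ⨅ w : S, ‖(0 : EuclideanSpace ℝ (Fin d)) - w‖ := by
      haveI : Nonempty S := ⟨⟨xstar, hxstarS⟩⟩
      apply le_antisymm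
      · apply le_ciInf
        intro w
        simpa using hxstarmin w w.2
      · have := ciInf_le (f := fun w : S => ‖(0 : EuclideanSpace ℝ (Fin d)) - (w : EuclideanSpace ℝ (Fin d))‖)
          ⟨0, by rintro x ⟨w, rfl⟩; exact norm_nonneg _⟩ (⟨xstar, hxstarS⟩ : S)
        simpa using this
    intro s hs
    have := (norm_eq_iInf_iff_real_inner_le_zero hSconv hxstarS).1 hiInf s hs
    have h0 : ⟪(0 : EuclideanSpace ℝ (Fin d)) - xstar, s - xstar⟫_ℝ = -⟪xstar, s - xstar⟫_ℝ := by
      rw [zero_sub, inner_neg_left]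
    rw [h0] at this
    linarith
  set K : ℝ := (2 * B ^ 2 / γ) ^ (1 / p) with hK
  have hK0 : 0 ≤ K := Real.rpow_nonneg (by positivity) _
  refine ⟨B * K + 1, by positivity, min 1 ((r - m) / (2 * B ^ 2 + 1)), lt_min one_pos (div_pos (by linarith) (by positivity)), ?_⟩
  intro η hη hηle
  -- φ (xc η) is a real number a
  have key := hxc η hη xstar
  have hane_top : φ (xc η) ≠ ⊤ := by
    intro h
    rw [h, hφx] at key
    simp [EReal.top_add_coe] at key
  set a : ℝ := (φ (xc η)).toReal with ha
  have hφa : φ (xc η) = (a : EReal) := (EReal.coe_toReal hane_top (hpb (xc η))).symm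
  have hma : m ≤ a := by
    have := hmin xstar hxstarS (xc η)
    rwa [hφx, hφa, EReal.coe_le_coe_iff] at this
  -- the subgradient inequality at w = xstar, in real form
  set t : ℝ := ⟪-(η • xc η), xstar - xc η⟫_ℝ with ht
  have hkey : a + t ≤ m := by
    rw [hφa, hφx, ← EReal.coe_add, EReal.coe_le_coe_iff] at key
    exact key
  set u : ℝ := ⟪xc η, xstar - xc η⟫_ℝ with hu
  have htu : t = -(η * u) := by
    rw [ht, hu, inner_neg_left, real_inner_smul_left]
  have hamu : a - m ≤ η * u := by rw [htu] at hkey; linarith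
  have hu0 : 0 ≤ u := nonneg_of_mul_nonneg_right (by linarith) hη
  -- ‖xc η‖ ≤ B
  have huexp : u = ⟪xc η, xstar⟫_ℝ - ‖xc η‖ ^ 2 := by
    rw [hu, inner_sub_right, real_inner_self_eq_norm_sq]
  have hinner_le : ⟪xc η, xstar⟫_ℝ ≤ ‖xc η‖ * B := real_inner_le_norm _ _
  have hxcB : ‖xc η‖ ≤ B := by nlinarith [norm_nonneg (xc η)]
  -- a - m ≤ 2 η B²
  have hu2B : u ≤ 2 * B ^ 2 := by
    have h1 : u ≤ ‖xc η‖ * ‖xstar - xc η‖ := by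
      rw [hu]; exact real_inner_le_norm _ _
    have h2 : ‖xstar - xc η‖ ≤ B + ‖xc η‖ := norm_sub_le _ _
    nlinarith [norm_nonneg (xc η), norm_nonneg (xstar - xc η)]
  have ham2 : a - m ≤ 2 * η * B ^ 2 := by nlinarith
  -- φ (xc η) ≤ r, so the error bound applies
  have hηle2 : η ≤ (r - m) / (2 * B ^ 2 + 1) := le_trans hηle (min_le_right _ _)
  have har : a ≤ r := by
    have hdpos : (0 : ℝ) < 2 * B ^ 2 + 1 := by positivity
    have : η * (2 * B ^ 2 + 1) ≤ r - m := by
      calc η * (2 * B ^ 2 + 1) ≤ (r - m) / (2 * B ^ 2 + 1) * (2 * B ^ 2 + 1) := by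
            exact mul_le_mul_of_nonneg_right hηle2 (le_of_lt hdpos)
        _ = r - m := div_mul_cancel₀ _ (ne_of_gt hdpos)
    nlinarith
  have heb' := heb (xc η) (by rw [hφa]; exact_mod_cast har)
  rw [hφx, hφa, ← EReal.coe_add, EReal.coe_le_coe_iff] at heb'
  set D : ℝ := Metric.infDist (xc η) S with hD
  have hD0 : 0 ≤ D := Metric.infDist_nonneg
  have hDp : γ * D ^ p ≤ 2 * η * B ^ 2 := by linarith
  -- D ≤ K * η^(1/p)
  have hDle : D ≤ K * η ^ (1 / p) := by
    have h1 : D ^ p ≤ 2 * η * B ^ 2 / γ := by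
      rw [le_div_iff₀ hγ]; linarith [hDp]
    have h2 : D = (D ^ p) ^ (1 / p) := by
      rw [← Real.rpow_mul hD0, mul_one_div_cancel (ne_of_gt hp0), Real.rpow_one]
    calc D = (D ^ p) ^ (1 / p) := h2
      _ ≤ (2 * η * B ^ 2 / γ) ^ (1 / p) := by
          apply Real.rpow_le_rpow (Real.rpow_nonneg hD0 _) h1 (by positivity)
      _ = ((2 * B ^ 2 / γ) * η) ^ (1 / p) := by ring_nf
      _ = K * η ^ (1 / p) := by
          rw [Real.mul_rpow (by positivity) (le_of_lt hη)]
  -- the closest point s in S to xc η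
  obtain ⟨s, hsS, hsd⟩ := hSclosed.exists_infDist_eq_dist hSne (xc η)
  have hsdist : ‖s - xc η‖ = D := by
    rw [hD, hsd, dist_eq_norm, norm_sub_rev]
  -- final chain
  have hstep1 : ‖xc η - xstar‖ ^ 2 ≤ ⟪xstar, xstar - xc η⟫_ℝ := by
    have hexp : ‖xc η - xstar‖ ^ 2
        = ‖xc η‖ ^ 2 - 2 * ⟪xc η, xstar⟫_ℝ + ‖xstar‖ ^ 2 := norm_sub_sq_real _ _
    have h1 : ‖xc η‖ ^ 2 ≤ ⟪xc η, xstar⟫_ℝ := by linarith [huexp, hu0]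
    have h2 : ⟪xstar, xstar - xc η⟫_ℝ = ‖xstar‖ ^ 2 - ⟪xc η, xstar⟫_ℝ := by
      rw [inner_sub_right, real_inner_self_eq_norm_sq, real_inner_comm]
    rw [hexp, h2]
    linarith [h1]
  have hstep2 : ⟪xstar, xstar - xc η⟫_ℝ ≤ ⟪xstar, s - xc η⟫_ℝ := by
    have hps := hproj s hsS
    have : ⟪xstar, s - xc η⟫_ℝ - ⟪xstar, xstar - xc η⟫_ℝ = ⟪xstar, s - xstar⟫_ℝ := by
      rw [← inner_sub_right]
      congr 1
      abel
    linarith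
  have hstep3 : ⟪xstar, s - xc η⟫_ℝ ≤ B * D := by
    calc ⟪xstar, s - xc η⟫_ℝ ≤ ‖xstar‖ * ‖s - xc η‖ := real_inner_le_norm _ _
      _ = B * D := by rw [hsdist]
  have hrpow0 : (0 : ℝ) ≤ η ^ (1 / p) := Real.rpow_nonneg (le_of_lt hη) _
  calc ‖xc η - xstar‖ ^ 2 ≤ B * D := le_trans hstep1 (le_trans hstep2 hstep3)
    _ ≤ B * (K * η ^ (1 / p)) := mul_le_mul_of_nonneg_left hDle hB0
    _ ≤ (B * K + 1) * η ^ (1 / p) := by nlinarith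
end

section
/- Let A : ℝ^d ⇉ ℝ^d be maximal monotone with minimal-norm zero x* := proj_{A⁻¹(0)}(0), and for η > 0 define x_η by -η x_η ∈ A(x_η). Then the curve η ↦ x_η is locally Lipschitz on (0,∞), and for almost every η > 0, ‖(d/dη) x_η‖ ≤ ‖x*‖/η. -/
open MeasureTheory

section aux
variable {d : ℕ} {A : EuclideanSpace ℝ (Fin d) → Set (EuclideanSpace ℝ (Fin d))}

theorem stmt15_norm_bound (hA : IsMonotoneOp A)
    (xstar : EuclideanSpace ℝ (Fin d))
    (hxstar : (0 : EuclideanSpace ℝ (Fin d)) ∈ A xstar)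
    (xc : ℝ → EuclideanSpace ℝ (Fin d))
    (hxc : ∀ η : ℝ, 0 < η → -(η • xc η) ∈ A (xc η))
    (η : ℝ) (hη : 0 < η) : ‖xc η‖ ≤ ‖xstar‖ := by
  have h := hA (hxc η hη) hxstar
  rw [sub_zero] at h
  have h1 : (inner ℝ (-(η • xc η)) (xc η - xstar) : ℝ) = -η * (inner ℝ (xc η) (xc η - xstar)) := by
    rw [inner_neg_left, real_inner_smul_left]; ring
  rw [h1] at h
  have h2 : (inner ℝ (xc η) (xc η - xstar) : ℝ) ≤ 0 := by nlinarith
  rw [inner_sub_right, real_inner_self_eq_norm_sq] at h2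
  have h3 := real_inner_le_norm (xc η) xstar
  nlinarith [norm_nonneg (xc η), norm_nonneg xstar]

theorem stmt15_key_bound (hA : IsMonotoneOp A)
    (xstar : EuclideanSpace ℝ (Fin d))
    (hxstar : (0 : EuclideanSpace ℝ (Fin d)) ∈ A xstar)
    (xc : ℝ → EuclideanSpace ℝ (Fin d))
    (hxc : ∀ η : ℝ, 0 < η → -(η • xc η) ∈ A (xc η))
    (η μ : ℝ) (hη : 0 < η) (hμ : 0 < μ) :
    η * ‖xc η - xc μ‖ ≤ |μ - η| * ‖xstar‖ := by
  have h := hA (hxc η hη) (hxc μ hμ)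
  set D := xc η - xc μ with hD
  have hexp : (-(η • xc η) - -(μ • xc μ)) = (μ - η) • xc μ - η • D := by
    rw [hD]; module
  rw [hexp, inner_sub_left, real_inner_smul_left, real_inner_smul_left,
    real_inner_self_eq_norm_sq] at h
  have h3 := real_inner_le_norm (xc μ) D
  have h4 := abs_real_inner_le_norm (xc μ) D
  have h5 : ‖xc μ‖ ≤ ‖xstar‖ := stmt15_norm_bound hA xstar hxstar xc hxc μ hμ
  have h6 : η * ‖D‖^2 ≤ |μ - η| * ‖xstar‖ * ‖D‖ := by
    have : (μ - η) * inner ℝ (xc μ) D ≤ |μ - η| * (‖xc μ‖ * ‖D‖) := by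
      calc (μ - η) * inner ℝ (xc μ) D ≤ |(μ - η) * inner ℝ (xc μ) D| := le_abs_self _
        _ = |μ - η| * |(inner ℝ (xc μ) D : ℝ)| := abs_mul _ _
        _ ≤ |μ - η| * (‖xc μ‖ * ‖D‖) := by
            exact mul_le_mul_of_nonneg_left h4 (abs_nonneg _)
    nlinarith [norm_nonneg D, mul_nonneg (mul_nonneg (abs_nonneg (μ - η)) (sub_nonneg.2 h5)) (norm_nonneg D)]
  rcases eq_or_lt_of_le (norm_nonneg D) with h0 | h0
  · rw [← h0, mul_zero]; positivity
  · exact le_of_mul_le_mul_right (by nlinarith : η * ‖D‖ * ‖D‖ ≤ |μ - η| * ‖xstar‖ * ‖D‖) h0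

end aux

/-- the Tikhonov curve `η ↦ x_η`, with `-η x_η ∈ A(x_η)`, is
locally Lipschitz on `(0,∞)`, and at almost every `η > 0` it is differentiable
with `‖(d/dη) x_η‖ ≤ ‖x*‖ / η`, `x*` being the minimal-norm zero of `A`. -/
theorem stmt_15 (d : ℕ) (A : EuclideanSpace ℝ (Fin d) → Set (EuclideanSpace ℝ (Fin d)))
    (hA : IsMaximalMonotoneOp A)
    (xstar : EuclideanSpace ℝ (Fin d))
    (hxstar : (0 : EuclideanSpace ℝ (Fin d)) ∈ A xstar)
    (hxstarmin : ∀ z, (0 : EuclideanSpace ℝ (Fin d)) ∈ A z → ‖xstar‖ ≤ ‖z‖)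
    (xc : ℝ → EuclideanSpace ℝ (Fin d))
    (hxc : ∀ η : ℝ, 0 < η → -(η • xc η) ∈ A (xc η)) :
    (∀ η : ℝ, 0 < η → ∃ (L : NNReal) (ε : ℝ), 0 < ε ∧
        LipschitzOnWith L xc (Metric.ball η ε ∩ Set.Ioi 0)) ∧
      ∀ᵐ η ∂(volume.restrict (Set.Ioi (0:ℝ))),
        ∃ v, HasDerivAt xc v η ∧ ‖v‖ ≤ ‖xstar‖ / η := by
  have key := stmt15_key_bound hA.1 xstar hxstar xc hxc
  constructor
  · intro η hη
    refine ⟨(2 * ‖xstar‖ / η).toNNReal, η / 2, by positivity, ?_⟩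
    apply LipschitzOnWith.of_dist_le_mul
    intro a ha b hb
    have ha2 : η / 2 < a := by
      have := ha.1
      rw [Metric.mem_ball, Real.dist_eq] at this
      cases' abs_lt.1 this with h1 h2
      linarith
    have hb2 : (0:ℝ) < b := hb.2
    have hk := key a b (by linarith) hb2
    rw [Real.coe_toNNReal _ (by positivity), Real.dist_eq, dist_eq_norm]
    have habs : |b - a| = |a - b| := abs_sub_comm b a
    rw [habs] at hk
    rw [div_mul_eq_mul_div, le_div_iff₀ hη]
    nlinarith [mul_nonneg (norm_nonneg (xc a - xc b)) (le_of_lt (by linarith : (0:ℝ) < a - η/2 + η/2)),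
      mul_nonneg (norm_nonneg (xc a - xc b)) (le_of_lt (sub_pos.mpr ha2)),
      abs_nonneg (a - b), norm_nonneg xstar]
  · have ae1 : ∀ n : ℕ, ∀ᵐ η ∂(volume : Measure ℝ),
        η ∈ Set.Ioo (((n:ℝ)+1))⁻¹ ((n:ℝ)+1) → DifferentiableAt ℝ xc η := by
      intro n
      set a : ℝ := (((n:ℝ)+1))⁻¹ with ha
      have ha0 : 0 < a := by positivity
      have hlip : LipschitzOnWith ((((n:ℝ)+1) * ‖xstar‖).toNNReal) xc (Set.Ioo a ((n:ℝ)+1)) := by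
        apply LipschitzOnWith.of_dist_le_mul
        intro x hx y hy
        have hx0 : a < x := hx.1
        have hk := key x y (lt_trans ha0 hx0) (lt_trans ha0 hy.1)
        rw [Real.coe_toNNReal _ (by positivity), Real.dist_eq, dist_eq_norm]
        have habs : |y - x| = |x - y| := abs_sub_comm y x
        rw [habs] at hk
        have hax : a * ‖xc x - xc y‖ ≤ |x - y| * ‖xstar‖ := by
          nlinarith [norm_nonneg (xc x - xc y)]
        have h1 : ((n:ℝ)+1) = a⁻¹ := by rw [ha, inv_inv]
        rw [h1]
        rw [inv_mul_eq_div, div_mul_eq_mul_div, le_div_iff₀ ha0]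
        nlinarith
      have := hlip.ae_differentiableWithinAt_of_mem (μ := volume)
      filter_upwards [this] with x hx hmem
      exact (hx hmem).differentiableAt (isOpen_Ioo.mem_nhds hmem)
    rw [ae_restrict_iff' measurableSet_Ioi]
    filter_upwards [ae_all_iff.2 ae1] with η hη hpos
    have hp : (0:ℝ) < η := hpos
    obtain ⟨n, hn⟩ := exists_nat_gt (max η η⁻¹)
    have hηn : η ∈ Set.Ioo (((n:ℝ)+1))⁻¹ ((n:ℝ)+1) := by
      constructor
      · have h1 : η⁻¹ < (n:ℝ)+1 := by
          have := lt_of_le_of_lt (le_max_right η η⁻¹) hn; linarith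
        have := inv_strictAnti₀ (inv_pos.2 hp) h1
        rwa [inv_inv] at this
      · have := lt_of_le_of_lt (le_max_left η η⁻¹) hn; linarith
    have hdiff := hη n hηn
    refine ⟨deriv xc η, hdiff.hasDerivAt, ?_⟩
    have hsl : Filter.Tendsto (slope xc η) (nhdsWithin η {η}ᶜ) (nhds (deriv xc η)) :=
      hasDerivAt_iff_tendsto_slope.mp hdiff.hasDerivAt
    have hnorm : Filter.Tendsto (fun t => ‖slope xc η t‖) (nhdsWithin η {η}ᶜ)
        (nhds ‖deriv xc η‖) := (continuous_norm.tendsto _).comp hsl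
    refine le_of_tendsto hnorm ?_
    have hev : ∀ᶠ t in nhdsWithin η {η}ᶜ, t ∈ Set.Ioi (0:ℝ) :=
      eventually_nhdsWithin_of_eventually_nhds
        (eventually_nhds_iff.2 ⟨Set.Ioi 0, fun x hx => hx, isOpen_Ioi, hp⟩)
    filter_upwards [hev, self_mem_nhdsWithin] with t ht hne
    have hne' : t ≠ η := hne
    have habs : (0:ℝ) < |t - η| := abs_pos.2 (sub_ne_zero.2 hne')
    have key' : η * ‖xc t - xc η‖ ≤ |t - η| * ‖xstar‖ := by
      rw [norm_sub_rev]
      have := key η t hp ht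
      exact this
    rw [slope_def_module, norm_smul, norm_inv, Real.norm_eq_abs,
      inv_mul_le_iff₀ habs, mul_div_assoc', le_div_iff₀ hp, mul_comm]
    exact key'
end
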